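/- arXiv:1302.1734 — 8 statements merged into one kernel-verified Lean document; each statement's English description precedes it below -/
import Mathlib

section
/- For every metric space (S,ρ), every sequence x : ℕ → S, all integers m, k, n ≥ 1 and every real r ≥ 0, the correlation sum and the diagonal line counts satisfy n²·C^m_k(x,n,r) = Σ_{l ≥ k} (l − k + 1)·L^m_l(x,n,r). -/
open Filter Topology MeasureTheory

/-- `dmax h x y = max_{0 ≤ l < h} dist (x l) (y l)` (equals 0 if `h = 0`). -/
noncomputable def dmax {S : Type*} [MetricSpace S] (h : ℕ) (x y : ℕ → S) : ℝ :=
  (((Finset.range h).sup fun l => nndist (x l) (y l) : NNReal) : ℝ)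

/-- the shifted sequence `x^{(i)}`. -/
def shift {S : Type*} (i : ℕ) (x : ℕ → S) : ℕ → S := fun l => x (i + l)

/-- `(i,j)` is an `r`-recurrence in the `m`'th embedding of the trajectory of `x`. -/
def isRec {S : Type*} [MetricSpace S] (m : ℕ) (x : ℕ → S) (r : ℝ) (i j : ℕ) : Prop :=
  dmax m (shift i x) (shift j x) ≤ r

open Classical in
/-- `L^m_k(x,n,r)`: the number of diagonal lines of length `k`
in the `n × n` recurrence plot. -/
noncomputable def Lcount {S : Type*} [MetricSpace S] (m k : ℕ) (x : ℕ → S) (n : ℕ)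
    (r : ℝ) : ℕ :=
  ((Finset.range (n + 1) ×ˢ Finset.range (n + 1)).filter fun p =>
    p.1 + k ≤ n ∧ p.2 + k ≤ n ∧
    (∀ h < k, isRec m x r (p.1 + h) (p.2 + h)) ∧
    (p.1 = 0 ∨ p.2 = 0 ∨ ¬ isRec m x r (p.1 - 1) (p.2 - 1)) ∧
    (p.1 + k = n ∨ p.2 + k = n ∨ ¬ isRec m x r (p.1 + k) (p.2 + k))).card

open Classical in
/-- `n² · C^m_k(x,n,r)`: the number of pairs `(i,j)`, `0 ≤ i,j ≤ n-k`, with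
`d^m_k(x^{(i)}, x^{(j)}) ≤ r`. -/
noncomputable def Ccount {S : Type*} [MetricSpace S] (m k : ℕ) (x : ℕ → S) (n : ℕ)
    (r : ℝ) : ℕ :=
  ((Finset.range (n + 1) ×ˢ Finset.range (n + 1)).filter fun p =>
    p.1 + k ≤ n ∧ p.2 + k ≤ n ∧
    dmax (m + k - 1) (shift p.1 x) (shift p.2 x) ≤ r).card

/-- The correlation sum `C^m_k(x,n,r)`. -/
noncomputable def Csum {S : Type*} [MetricSpace S] (m k : ℕ) (x : ℕ → S) (n : ℕ)
    (r : ℝ) : ℝ :=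
  (Ccount m k x n r : ℝ) / (n : ℝ) ^ 2

/-- The `k`-recurrence rate `RR^m_k(x,n,r) = (1/n²) Σ_{l ≥ k} l · L^m_l(x,n,r)`. -/
noncomputable def RRsum {S : Type*} [MetricSpace S] (m k : ℕ) (x : ℕ → S) (n : ℕ)
    (r : ℝ) : ℝ :=
  (1 / (n : ℝ) ^ 2) * ∑' l : ℕ, if k ≤ l then (l : ℝ) * (Lcount m l x n r : ℝ) else 0

lemma dmax_le_iff {S : Type*} [MetricSpace S] {h : ℕ} {x y : ℕ → S} {r : ℝ} (hr : 0 ≤ r) :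
    dmax h x y ≤ r ↔ ∀ l < h, dist (x l) (y l) ≤ r := by
  constructor
  · intro H l hl
    calc dist (x l) (y l) = ((nndist (x l) (y l) : NNReal) : ℝ) := (dist_nndist _ _)
      _ ≤ dmax h x y := by
          exact NNReal.coe_le_coe.mpr (Finset.le_sup (f := fun l => nndist (x l) (y l)) (Finset.mem_range.mpr hl))
      _ ≤ r := H
  · intro H
    have hs : ((Finset.range h).sup fun l => nndist (x l) (y l)) ≤ (⟨r, hr⟩ : NNReal) := by
      refine Finset.sup_le fun l hl => ?_
      refine NNReal.coe_le_coe.mp ?_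
      rw [← dist_nndist]
      exact H l (Finset.mem_range.mp hl)
    calc dmax h x y ≤ ((⟨r, hr⟩ : NNReal) : ℝ) := NNReal.coe_le_coe.mpr hs
      _ = r := rfl

lemma isRec_iff {S : Type*} [MetricSpace S] {m : ℕ} {x : ℕ → S} {r : ℝ} (hr : 0 ≤ r)
    {i j : ℕ} : isRec m x r i j ↔ ∀ l < m, dist (x (i + l)) (x (j + l)) ≤ r := by
  rw [isRec, dmax_le_iff hr]; rfl

lemma window_iff {S : Type*} [MetricSpace S] {m k : ℕ} (hm : 1 ≤ m) (hk : 1 ≤ k)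
    {x : ℕ → S} {r : ℝ} (hr : 0 ≤ r) {i j : ℕ} :
    dmax (m + k - 1) (shift i x) (shift j x) ≤ r ↔
      ∀ h < k, isRec m x r (i + h) (j + h) := by
  rw [dmax_le_iff hr]
  constructor
  · intro H h hh
    rw [isRec_iff hr]
    intro l hl
    have := H (h + l) (by omega)
    rw [show i + h + l = i + (h + l) by omega, show j + h + l = j + (h + l) by omega]
    exact this
  · intro H l hl
    rcases lt_or_ge l m with h1 | h1
    · have := (isRec_iff hr).mp (H 0 hk) l h1
      simpa [shift] using this
    · have := (isRec_iff hr).mp (H (l - m + 1) (by omega)) (m - 1) (by omega)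
      rw [show i + (l - m + 1) + (m - 1) = i + l by omega,
        show j + (l - m + 1) + (m - 1) = j + l by omega] at this
      exact this

lemma findGreatest_eq_of {P : ℕ → Prop} [DecidablePred P] {t b : ℕ}
    (hdc : ∀ a c, a ≤ c → P c → P a) (ht : P t) (ht1 : ¬ P (t + 1)) (htb : t ≤ b) :
    Nat.findGreatest P b = t := by
  refine le_antisymm ?_ (Nat.le_findGreatest htb ht)
  by_contra hlt
  push_neg at hlt
  exact ht1 (hdc (t + 1) _ hlt (Nat.findGreatest_spec htb ht))

open Classical in
lemma Lcount_eq_zero {S : Type*} [MetricSpace S] (x : ℕ → S) (m l n : ℕ) (r : ℝ)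
    (hl : n < l) : Lcount m l x n r = 0 := by
  rw [Lcount, Finset.card_eq_zero, Finset.filter_eq_empty_iff]
  rintro p hp ⟨h1, -⟩
  omega

open Classical in
lemma key_count {S : Type*} [MetricSpace S] (x : ℕ → S) (m k n : ℕ)
    (hm : 1 ≤ m) (hk : 1 ≤ k) (hn : 1 ≤ n) (r : ℝ) (hr : 0 ≤ r) :
    Ccount m k x n r =
      ∑ l ∈ Finset.range (n + 1), if k ≤ l then (l - k + 1) * Lcount m l x n r else 0 := by
  classical
  set R : ℕ → ℕ → Prop := fun i j => isRec m x r i j with hRdef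
  -- the finset of line starts of length l
  set Lfin : ℕ → Finset (ℕ × ℕ) := fun l =>
    (Finset.range (n + 1) ×ˢ Finset.range (n + 1)).filter fun p =>
      p.1 + l ≤ n ∧ p.2 + l ≤ n ∧
      (∀ h < l, isRec m x r (p.1 + h) (p.2 + h)) ∧
      (p.1 = 0 ∨ p.2 = 0 ∨ ¬ isRec m x r (p.1 - 1) (p.2 - 1)) ∧
      (p.1 + l = n ∨ p.2 + l = n ∨ ¬ isRec m x r (p.1 + l) (p.2 + l)) with hLfin
  have hLcard : ∀ l, Lcount m l x n r = (Lfin l).card := fun l => rfl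
  have hLmem : ∀ l (p : ℕ × ℕ), p ∈ Lfin l ↔
      p.1 + l ≤ n ∧ p.2 + l ≤ n ∧ (∀ h < l, R (p.1 + h) (p.2 + h)) ∧
      (p.1 = 0 ∨ p.2 = 0 ∨ ¬ R (p.1 - 1) (p.2 - 1)) ∧
      (p.1 + l = n ∨ p.2 + l = n ∨ ¬ R (p.1 + l) (p.2 + l)) := by
    intro l p
    rw [hLfin]
    simp only [Finset.mem_filter, Finset.mem_product, Finset.mem_range, hRdef]
    constructor
    · rintro ⟨-, h⟩; exact h
    · intro h; exact ⟨⟨by omega, by omega⟩, h⟩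
  set Cfin : Finset (ℕ × ℕ) :=
    (Finset.range (n + 1) ×ˢ Finset.range (n + 1)).filter fun p =>
      p.1 + k ≤ n ∧ p.2 + k ≤ n ∧
      dmax (m + k - 1) (shift p.1 x) (shift p.2 x) ≤ r with hCfin
  have hCcard : Ccount m k x n r = Cfin.card := rfl
  have hCmem : ∀ p : ℕ × ℕ, p ∈ Cfin ↔
      p.1 + k ≤ n ∧ p.2 + k ≤ n ∧ ∀ h < k, R (p.1 + h) (p.2 + h) := by
    intro p
    rw [hCfin]
    simp only [Finset.mem_filter, Finset.mem_product, Finset.mem_range, hRdef,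
      window_iff hm hk hr]
    constructor
    · rintro ⟨-, h⟩; exact h
    · intro h; exact ⟨⟨by omega, by omega⟩, h⟩
  -- back/forward extension predicates
  set P : ℕ → ℕ → ℕ → Prop := fun i j t => t ≤ i ∧ t ≤ j ∧ ∀ s ≤ t, R (i - s) (j - s)
    with hPdef
  set Q : ℕ → ℕ → ℕ → Prop := fun i j u =>
    i + k + u ≤ n ∧ j + k + u ≤ n ∧ ∀ v < u, R (i + k + v) (j + k + v) with hQdef
  have hPdc : ∀ i j a c, a ≤ c → P i j c → P i j a := by
    rintro i j a c hac ⟨h1, h2, h3⟩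
    exact ⟨by omega, by omega, fun s hs => h3 s (by omega)⟩
  have hQdc : ∀ i j a c, a ≤ c → Q i j c → Q i j a := by
    rintro i j a c hac ⟨h1, h2, h3⟩
    exact ⟨by omega, by omega, fun v hv => h3 v (by omega)⟩
  set B : ℕ → ℕ → ℕ := fun i j => Nat.findGreatest (P i j) (min i j) with hBdef
  set F : ℕ → ℕ → ℕ := fun i j => Nat.findGreatest (Q i j) n with hFdef
  set T : Finset (Σ _ : ℕ, (ℕ × ℕ) × ℕ) :=
    (Finset.range (n + 1)).sigma fun l =>
      if k ≤ l then Lfin l ×ˢ Finset.range (l - k + 1) else ∅ with hT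
  have hTmem : ∀ q : Σ _ : ℕ, (ℕ × ℕ) × ℕ, q ∈ T ↔
      k ≤ q.1 ∧ q.2.1 ∈ Lfin q.1 ∧ q.2.2 ≤ q.1 - k := by
    intro ⟨l, p, t⟩
    rw [hT]
    simp only [Finset.mem_sigma, Finset.mem_range]
    constructor
    · rintro ⟨hl, h2⟩
      by_cases hkl : k ≤ l
      · rw [if_pos hkl] at h2
        simp only [Finset.mem_product, Finset.mem_range] at h2
        exact ⟨hkl, h2.1, by omega⟩
      · rw [if_neg hkl] at h2; exact absurd h2 (Finset.notMem_empty _)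
    · rintro ⟨hkl, hp, ht⟩
      have hl : l ≤ n := by
        have := (hLmem l _).mp hp
        omega
      refine ⟨by omega, ?_⟩
      rw [if_pos hkl]
      simp only [Finset.mem_product, Finset.mem_range]
      exact ⟨hp, by omega⟩
  -- RHS equals card of T
  have hTcard : T.card =
      ∑ l ∈ Finset.range (n + 1), if k ≤ l then (l - k + 1) * Lcount m l x n r else 0 := by
    rw [hT, Finset.card_sigma]
    refine Finset.sum_congr rfl fun l _ => ?_
    rw [apply_ite Finset.card, Finset.card_product, Finset.card_range, Finset.card_empty,
      hLcard l, mul_comm]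
  rw [hCcard, ← hTcard]
  -- the bijection
  refine Finset.card_nbij'
    (fun p => ⟨B p.1 p.2 + k + F p.1 p.2,
      ((p.1 - B p.1 p.2, p.2 - B p.1 p.2), B p.1 p.2)⟩)
    (fun q => (q.2.1.1 + q.2.2, q.2.1.2 + q.2.2)) ?_ ?_ ?_ ?_
  · -- forward maps Cfin into T
    rintro ⟨i, j⟩ hp
    obtain ⟨hik, hjk, hrec⟩ := (hCmem _).mp hp
    have hP0 : P i j 0 := by
      refine ⟨Nat.zero_le _, Nat.zero_le _, fun s hs => ?_⟩
      interval_cases s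
      simpa using hrec 0 hk
    have hQ0 : Q i j 0 := ⟨hik, hjk, fun v hv => absurd hv (by omega)⟩
    have hPb : P i j (B i j) := Nat.findGreatest_spec (Nat.zero_le _) hP0
    have hQf : Q i j (F i j) := Nat.findGreatest_spec (Nat.zero_le _) hQ0
    set b := B i j with hb
    set f := F i j with hf
    have hfgP : Nat.findGreatest (P i j) (min i j) = b := rfl
    have hfgQ : Nat.findGreatest (Q i j) n = f := rfl
    have hPb1 : ¬ P i j (b + 1) := by
      by_cases hble : b + 1 ≤ min i j
      · exact Nat.findGreatest_is_greatest (by omega) hble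
      · rintro ⟨h1, h2, -⟩; omega
    have hQf1 : ¬ Q i j (f + 1) := by
      by_cases hfle : f + 1 ≤ n
      · exact Nat.findGreatest_is_greatest (by omega) hfle
      · rintro ⟨h1, -⟩; omega
    obtain ⟨hbi, hbj, hback⟩ := hPb
    obtain ⟨hfi, hfj, hfwd⟩ := hQf
    rw [Finset.mem_coe, hTmem]
    refine ⟨show k ≤ b + k + f by omega, ?_, show b ≤ b + k + f - k by omega⟩
    rw [hLmem]
    refine ⟨show i - b + (b + k + f) ≤ n by omega,
      show j - b + (b + k + f) ≤ n by omega, ?_, ?_, ?_⟩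
    · intro h hh
      replace hh : h < b + k + f := hh
      show R (i - b + h) (j - b + h)
      rcases lt_or_ge h (b + 1) with h1 | h1
      · have := hback (b - h) (by omega)
        rw [show i - b + h = i - (b - h) by omega, show j - b + h = j - (b - h) by omega]
        exact this
      · rcases lt_or_ge h (b + k) with h2 | h2
        · have := hrec (h - b) (by omega)
          rw [show i - b + h = i + (h - b) by omega, show j - b + h = j + (h - b) by omega]
          exact this
        · have := hfwd (h - b - k) (by omega)
          rw [show i - b + h = i + k + (h - b - k) by omega,
            show j - b + h = j + k + (h - b - k) by omega]
          exact this
    · show i - b = 0 ∨ j - b = 0 ∨ ¬ R (i - b - 1) (j - b - 1)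
      rcases Nat.lt_or_ge i (b + 1) with h1 | h1
      · left; omega
      rcases Nat.lt_or_ge j (b + 1) with h2 | h2
      · right; left; omega
      right; right
      intro hcon
      apply hPb1
      refine ⟨by omega, by omega, fun s hs => ?_⟩
      rcases Nat.lt_or_ge s (b + 1) with h3 | h3
      · exact hback s (by omega)
      · have hsb : s = b + 1 := by omega
        subst hsb
        rw [show i - (b + 1) = i - b - 1 by omega, show j - (b + 1) = j - b - 1 by omega]
        exact hcon
    · show i - b + (b + k + f) = n ∨ j - b + (b + k + f) = n ∨
        ¬ R (i - b + (b + k + f)) (j - b + (b + k + f))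
      rcases Nat.lt_or_ge n (i + k + f + 1) with h1 | h1
      · left; omega
      rcases Nat.lt_or_ge n (j + k + f + 1) with h2 | h2
      · right; left; omega
      right; right
      intro hcon
      apply hQf1
      refine ⟨by omega, by omega, fun v hv => ?_⟩
      rcases Nat.lt_or_ge v f with h3 | h3
      · exact hfwd v h3
      · have hvf : v = f := by omega
        subst hvf
        rw [show i - b + (b + k + f) = i + k + f by omega,
          show j - b + (b + k + f) = j + k + f by omega] at hcon
        exact hcon
  · -- backward maps T into Cfin
    rintro ⟨l, ⟨i0, j0⟩, t⟩ hq
    obtain ⟨hkl, hp, ht⟩ := (hTmem _).mp hq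
    replace hkl : k ≤ l := hkl
    replace ht : t ≤ l - k := ht
    replace hp : (i0, j0) ∈ Lfin l := hp
    obtain ⟨h1, h2, hrecs, -, -⟩ := (hLmem _ _).mp hp
    replace h1 : i0 + l ≤ n := h1
    replace h2 : j0 + l ≤ n := h2
    replace hrecs : ∀ h < l, R (i0 + h) (j0 + h) := hrecs
    rw [Finset.mem_coe, hCmem]
    refine ⟨show i0 + t + k ≤ n by omega, show j0 + t + k ≤ n by omega, fun h hh => ?_⟩
    show R (i0 + t + h) (j0 + t + h)
    have := hrecs (t + h) (by omega)
    rw [show i0 + t + h = i0 + (t + h) by omega, show j0 + t + h = j0 + (t + h) by omega]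
    exact this
  · -- left inverse on Cfin
    rintro ⟨i, j⟩ hp
    obtain ⟨hik, hjk, hrec⟩ := (hCmem _).mp hp
    have hP0 : P i j 0 := by
      refine ⟨Nat.zero_le _, Nat.zero_le _, fun s hs => ?_⟩
      interval_cases s
      simpa using hrec 0 hk
    have hPb : P i j (B i j) := Nat.findGreatest_spec (Nat.zero_le _) hP0
    have : i - B i j + B i j = i ∧ j - B i j + B i j = j := by
      obtain ⟨h1, h2, -⟩ := hPb
      omega
    simp only [Prod.mk.injEq]
    exact this
  · -- right inverse on T
    rintro ⟨l, ⟨i0, j0⟩, t⟩ hq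
    obtain ⟨hkl, hp, ht⟩ := (hTmem _).mp hq
    replace hkl : k ≤ l := hkl
    replace ht : t ≤ l - k := ht
    replace hp : (i0, j0) ∈ Lfin l := hp
    obtain ⟨h1, h2, hrecs, hleft, hright⟩ := (hLmem _ _).mp hp
    replace h1 : i0 + l ≤ n := h1
    replace h2 : j0 + l ≤ n := h2
    replace hrecs : ∀ h < l, R (i0 + h) (j0 + h) := hrecs
    replace hleft : i0 = 0 ∨ j0 = 0 ∨ ¬ R (i0 - 1) (j0 - 1) := hleft
    replace hright : i0 + l = n ∨ j0 + l = n ∨ ¬ R (i0 + l) (j0 + l) := hright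
    have hB : B (i0 + t) (j0 + t) = t := by
      rw [hBdef]
      refine findGreatest_eq_of (hPdc _ _) ?_ ?_ (by omega)
      · refine ⟨by omega, by omega, fun s hs => ?_⟩
        have := hrecs (t - s) (by omega)
        rw [show i0 + t - s = i0 + (t - s) by omega, show j0 + t - s = j0 + (t - s) by omega]
        exact this
      · rintro ⟨hh1, hh2, hh3⟩
        have := hh3 (t + 1) le_rfl
        rw [show i0 + t - (t + 1) = i0 - 1 by omega,
          show j0 + t - (t + 1) = j0 - 1 by omega] at this
        rcases hleft with h | h | h
        · omega
        · omega
        · exact h this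
    have hF : F (i0 + t) (j0 + t) = l - k - t := by
      rw [hFdef]
      refine findGreatest_eq_of (hQdc _ _) ?_ ?_ (by omega)
      · refine ⟨by omega, by omega, fun v hv => ?_⟩
        have := hrecs (t + k + v) (by omega)
        rw [show i0 + t + k + v = i0 + (t + k + v) by omega,
          show j0 + t + k + v = j0 + (t + k + v) by omega]
        exact this
      · rintro ⟨hh1, hh2, hh3⟩
        have := hh3 (l - k - t) (by omega)
        rw [show i0 + t + k + (l - k - t) = i0 + l by omega,
          show j0 + t + k + (l - k - t) = j0 + l by omega] at this
        rcases hright with h | h | h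
        · omega
        · omega
        · exact h this
    show (⟨B (i0 + t) (j0 + t) + k + F (i0 + t) (j0 + t),
      ((i0 + t - B (i0 + t) (j0 + t), j0 + t - B (i0 + t) (j0 + t)),
        B (i0 + t) (j0 + t))⟩ : Σ _ : ℕ, (ℕ × ℕ) × ℕ) = ⟨l, ((i0, j0), t)⟩
    rw [hB, hF, show t + k + (l - k - t) = l by omega,
      show i0 + t - t = i0 by omega, show j0 + t - t = j0 by omega]

/-- For every metric space `(S,ρ)`, every sequence `x : ℕ → S`,
all integers `m, k, n ≥ 1` and every real `r ≥ 0`,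
`n² · C^m_k(x,n,r) = Σ_{l ≥ k} (l − k + 1) · L^m_l(x,n,r)`. -/
theorem corrSum_eq_sum_lines {S : Type*} [MetricSpace S] (x : ℕ → S) (m k n : ℕ)
    (hm : 1 ≤ m) (hk : 1 ≤ k) (hn : 1 ≤ n) (r : ℝ) (hr : 0 ≤ r) :
    (n : ℝ) ^ 2 * Csum m k x n r =
      ∑' l : ℕ, if k ≤ l then ((l : ℝ) - (k : ℝ) + 1) * (Lcount m l x n r : ℝ) else 0 := by
  classical
  have hn0 : ((n : ℝ) ^ 2) ≠ 0 := by positivity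
  have h1 : (n : ℝ) ^ 2 * Csum m k x n r = (Ccount m k x n r : ℝ) := by
    rw [Csum, mul_div_cancel₀ _ hn0]
  rw [h1]
  have h2 : (∑' l : ℕ, if k ≤ l then ((l : ℝ) - (k : ℝ) + 1) * (Lcount m l x n r : ℝ) else 0)
      = ∑ l ∈ Finset.range (n + 1),
          if k ≤ l then ((l : ℝ) - (k : ℝ) + 1) * (Lcount m l x n r : ℝ) else 0 := by
    refine tsum_eq_sum fun l hl => ?_
    rw [Finset.mem_range, not_lt] at hl
    by_cases hkl : k ≤ l
    · rw [if_pos hkl, Lcount_eq_zero x m l n r (by omega)]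
      simp
    · rw [if_neg hkl]
  rw [h2, key_count x m k n hm hk hn r hr]
  push_cast
  refine Finset.sum_congr rfl fun l _ => ?_
  by_cases hkl : k ≤ l
  · rw [if_pos hkl, if_pos hkl]
    push_cast [hkl]
    ring
  · rw [if_neg hkl, if_neg hkl]
end

section
/- For every metric space (S,ρ), every sequence x : ℕ → S, all integers m, k, n ≥ 1 and every real r ≥ 0, one has (1/n²)·Σ_{l ≥ k} L^m_l(x,n,r) = C^m_k(x,n,r) − C^m_{k+1}(x,n,r); consequently, whenever C^m_k(x,n,r) > C^m_{k+1}(x,n,r), the k-average line length satisfies LAVG^m_k(x,n,r) = k + C^m_{k+1}(x,n,r)/(C^m_k(x,n,r) − C^m_{k+1}(x,n,r)). -/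
open Filter Topology MeasureTheory

/-- The `k`-average line length
`LAVG^m_k(x,n,r) = RR^m_k(x,n,r) / ((1/n²) Σ_{l ≥ k} L^m_l(x,n,r))`. -/
noncomputable def LAVGsum {S : Type*} [MetricSpace S] (m k : ℕ) (x : ℕ → S) (n : ℕ)
    (r : ℝ) : ℝ :=
  RRsum m k x n r /
    ((1 / (n : ℝ) ^ 2) * ∑' l : ℕ, if k ≤ l then (Lcount m l x n r : ℝ) else 0)

namespace RPAux

open Classical Finset

lemma dmax_le_iff {S : Type*} [MetricSpace S] {r : ℝ} (hr : 0 ≤ r) (h : ℕ) (y z : ℕ → S) :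
    dmax h y z ≤ r ↔ ∀ l < h, dist (y l) (z l) ≤ r := by
  unfold dmax
  constructor
  · intro H l hl
    have h1 : (nndist (y l) (z l) : ℝ) ≤
        (((Finset.range h).sup fun l => nndist (y l) (z l) : NNReal) : ℝ) :=
      NNReal.coe_le_coe.mpr (Finset.le_sup (f := fun l => nndist (y l) (z l)) (Finset.mem_range.mpr hl))
    rw [coe_nndist] at h1
    exact h1.trans H
  · intro H
    have h2 : ((Finset.range h).sup fun l => nndist (y l) (z l)) ≤ r.toNNReal := by
      apply Finset.sup_le
      intro l hl
      rw [← NNReal.coe_le_coe, coe_nndist, Real.coe_toNNReal r hr]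
      exact H l (Finset.mem_range.mp hl)
    calc (((Finset.range h).sup fun l => nndist (y l) (z l) : NNReal) : ℝ)
        ≤ (r.toNNReal : ℝ) := NNReal.coe_le_coe.mpr h2
      _ = r := Real.coe_toNNReal r hr

/-- the `k`-window characterization of `d^m_k ≤ r`. -/
lemma window_iff {S : Type*} [MetricSpace S] {r : ℝ} (hr : 0 ≤ r) (x : ℕ → S)
    {m k : ℕ} (hm : 1 ≤ m) (hk : 1 ≤ k) (i j : ℕ) :
    dmax (m + k - 1) (shift i x) (shift j x) ≤ r ↔
      ∀ h < k, isRec m x r (i + h) (j + h) := by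
  simp only [isRec, dmax_le_iff hr, shift]
  constructor
  · intro H h hh l hl
    have := H (h + l) (by omega)
    have e1 : i + h + l = i + (h + l) := by omega
    have e2 : j + h + l = j + (h + l) := by omega
    rwa [e1, e2]
  · intro H t ht
    have := H (min t (k - 1)) (by omega) (t - min t (k - 1)) (by omega)
    have e1 : i + min t (k - 1) + (t - min t (k - 1)) = i + t := by omega
    have e2 : j + min t (k - 1) + (t - min t (k - 1)) = j + t := by omega
    rwa [e1, e2] at this



variable (R : ℕ → ℕ → Prop) (n : ℕ)

/-- grid of the recurrence plot -/
noncomputable def grid : Finset (ℕ × ℕ) := Finset.range (n + 1) ×ˢ Finset.range (n + 1)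

/-- `(p.1,p.2)` begins a diagonal line of length `l`. -/
def SL (l : ℕ) (p : ℕ × ℕ) : Prop :=
  p.1 + l ≤ n ∧ p.2 + l ≤ n ∧ (∀ h < l, R (p.1 + h) (p.2 + h)) ∧
  (p.1 = 0 ∨ p.2 = 0 ∨ ¬ R (p.1 - 1) (p.2 - 1)) ∧
  (p.1 + l = n ∨ p.2 + l = n ∨ ¬ R (p.1 + l) (p.2 + l))

/-- `(p.1,p.2)` begins a `j`-window of recurrences that ends a line. -/
def EndW (j : ℕ) (p : ℕ × ℕ) : Prop :=
  p.1 + j ≤ n ∧ p.2 + j ≤ n ∧ (∀ h < j, R (p.1 + h) (p.2 + h)) ∧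
  (p.1 + j = n ∨ p.2 + j = n ∨ ¬ R (p.1 + j) (p.2 + j))

lemma SL_not_lt {l l' : ℕ} {p : ℕ × ℕ} (h : SL R n l p) (h' : SL R n l' p) (hll : l < l') :
    False := by
  obtain ⟨a1, _, _, _, e⟩ := h
  obtain ⟨a1', _, w', _, _⟩ := h'
  have hrec := w' l hll
  rcases e with e | e | e
  · omega
  · omega
  · exact e hrec

lemma SL_unique {l l' : ℕ} {p : ℕ × ℕ} (h : SL R n l p) (h' : SL R n l' p) : l = l' := by
  rcases lt_trichotomy l l' with hl | hl | hl
  · exact absurd (SL_not_lt R n h h' hl) (fun t => t)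
  · exact hl
  · exact absurd (SL_not_lt R n h' h hl) (fun t => t)

/-- forward extension length -/
noncomputable def E (j : ℕ) (p : ℕ × ℕ) : ℕ :=
  Nat.findGreatest (fun e => p.1 + e + j ≤ n ∧ p.2 + e + j ≤ n ∧
    ∀ h < e + j, R (p.1 + h) (p.2 + h)) n

/-- backward extension length -/
noncomputable def T (p : ℕ × ℕ) : ℕ :=
  Nat.findGreatest (fun u => u ≤ p.1 ∧ u ≤ p.2 ∧ ∀ v ≤ u, R (p.1 - v) (p.2 - v)) p.1

lemma E_eq {j l : ℕ} {p : ℕ × ℕ} (hj : 1 ≤ j) (hjl : j ≤ l) (h : SL R n l p) :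
    E R n j p = l - j := by
  obtain ⟨a1, a2, w, st, e⟩ := h
  rw [E, Nat.findGreatest_eq_iff]
  refine ⟨by omega, fun _ => ⟨by omega, by omega, fun h hh => w h (by omega)⟩, ?_⟩
  intro u hu hun ⟨c1, c2, c3⟩
  have hrec := c3 l (by omega)
  rcases e with e | e | e
  · omega
  · omega
  · exact e hrec

lemma psi_mem {j l : ℕ} {p : ℕ × ℕ} (hj : 1 ≤ j) (hjl : j ≤ l) (h : SL R n l p) :
    EndW R n j (p.1 + (l - j), p.2 + (l - j)) := by
  obtain ⟨a1, a2, w, st, e⟩ := h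
  refine ⟨by omega, by omega, ?_, ?_⟩
  · intro h hh
    have e1 : p.1 + (l - j) + h = p.1 + (l - j + h) := by omega
    have e2 : p.2 + (l - j) + h = p.2 + (l - j + h) := by omega
    rw [e1, e2]
    exact w _ (by omega)
  · have e1 : p.1 + (l - j) + j = p.1 + l := by omega
    have e2 : p.2 + (l - j) + j = p.2 + l := by omega
    rw [e1, e2]
    exact e

lemma T_spec {j : ℕ} {p : ℕ × ℕ} (hj : 1 ≤ j) (h : EndW R n j p) :
    T R p ≤ p.1 ∧ T R p ≤ p.2 ∧ (∀ v ≤ T R p, R (p.1 - v) (p.2 - v)) ∧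
      ¬ (T R p + 1 ≤ p.1 ∧ T R p + 1 ≤ p.2 ∧
        ∀ v ≤ T R p + 1, R (p.1 - v) (p.2 - v)) := by
  have key := (Nat.findGreatest_eq_iff (P := fun u => u ≤ p.1 ∧ u ≤ p.2 ∧
      ∀ v ≤ u, R (p.1 - v) (p.2 - v)) (k := p.1) (m := T R p)).mp rfl
  obtain ⟨a1, a2, w, e⟩ := h
  have h0 : (0 : ℕ) ≤ p.1 ∧ (0 : ℕ) ≤ p.2 ∧ ∀ v ≤ 0, R (p.1 - v) (p.2 - v) := by
    refine ⟨Nat.zero_le _, Nat.zero_le _, fun v hv => ?_⟩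
    have : v = 0 := by omega
    subst this
    simpa using w 0 hj
  have hPT : T R p ≤ p.1 ∧ T R p ≤ p.2 ∧ ∀ v ≤ T R p, R (p.1 - v) (p.2 - v) := by
    rcases Nat.eq_zero_or_pos (T R p) with hz | hz
    · rw [hz]
      exact h0
    · exact key.2.1 (by omega)
  refine ⟨hPT.1, hPT.2.1, hPT.2.2, ?_⟩
  intro ⟨c1, c2, c3⟩
  exact key.2.2 (by omega) c1 ⟨c1, c2, c3⟩

lemma phi_SL {j : ℕ} {p : ℕ × ℕ} (hj : 1 ≤ j) (h : EndW R n j p) :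
    SL R n (T R p + j) (p.1 - T R p, p.2 - T R p) := by
  obtain ⟨ht1, ht2, hrec, hmax⟩ := T_spec R n hj h
  obtain ⟨a1, a2, w, e⟩ := h
  set t := T R p with htdef
  refine ⟨by omega, by omega, ?_, ?_, ?_⟩
  · intro h hh
    rcases le_or_gt h t with hc | hc
    · have e1 : p.1 - t + h = p.1 - (t - h) := by omega
      have e2 : p.2 - t + h = p.2 - (t - h) := by omega
      rw [e1, e2]
      exact hrec _ (by omega)
    · have e1 : p.1 - t + h = p.1 + (h - t) := by omega
      have e2 : p.2 - t + h = p.2 + (h - t) := by omega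
      rw [e1, e2]
      exact w _ (by omega)
  · by_cases h1 : p.1 - t = 0
    · exact Or.inl h1
    by_cases h2 : p.2 - t = 0
    · exact Or.inr (Or.inl h2)
    refine Or.inr (Or.inr ?_)
    intro hrec'
    apply hmax
    refine ⟨by omega, by omega, fun v hv => ?_⟩
    rcases le_or_gt v t with hc | hc
    · exact hrec _ hc
    · have hv1 : v = t + 1 := by omega
      subst hv1
      have e1 : p.1 - (t + 1) = p.1 - t - 1 := by omega
      have e2 : p.2 - (t + 1) = p.2 - t - 1 := by omega
      rw [e1, e2]
      exact hrec'
  · have e1 : p.1 - t + (t + j) = p.1 + j := by omega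
    have e2 : p.2 - t + (t + j) = p.2 + j := by omega
    rw [e1, e2]
    exact e

lemma T_of_SL {j l : ℕ} {p : ℕ × ℕ} (hj : 1 ≤ j) (hjl : j ≤ l) (h : SL R n l p) :
    T R (p.1 + (l - j), p.2 + (l - j)) = l - j := by
  obtain ⟨a1, a2, w, st, e⟩ := h
  rw [T, Nat.findGreatest_eq_iff]
  refine ⟨by omega, ?_, ?_⟩
  · intro _
    refine ⟨by omega, by omega, fun v hv => ?_⟩
    have e1 : p.1 + (l - j) - v = p.1 + (l - j - v) := by omega
    have e2 : p.2 + (l - j) - v = p.2 + (l - j - v) := by omega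
    rw [e1, e2]
    exact w _ (by omega)
  · intro u hu hub ⟨c1, c2, c3⟩
    have hv := c3 (l - j + 1) (by omega)
    have e1 : p.1 + (l - j) - (l - j + 1) = p.1 - 1 := by omega
    have e2 : p.2 + (l - j) - (l - j + 1) = p.2 - 1 := by omega
    rw [e1, e2] at hv
    rcases st with st | st | st
    · omega
    · omega
    · exact st hv

open Classical in
/-- The central counting identity. -/
lemma sum_SL_card (j : ℕ) (hj : 1 ≤ j) :
    ∑ l ∈ Finset.Icc j n, ((grid n).filter (SL R n l)).card =
      ((grid n).filter (EndW R n j)).card := by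
  classical
  rw [← Finset.card_biUnion]
  · apply Finset.card_nbij' (fun p => (p.1 + E R n j p, p.2 + E R n j p))
      (fun p => (p.1 - T R p, p.2 - T R p))
    · intro p hp
      simp only [Finset.mem_coe, Finset.mem_biUnion] at hp
      obtain ⟨l, hl, hpl⟩ := hp
      rw [Finset.mem_Icc] at hl
      rw [Finset.mem_filter] at hpl
      obtain ⟨hg, hsl⟩ := hpl
      beta_reduce
      rw [E_eq R n hj hl.1 hsl]
      rw [Finset.mem_coe, Finset.mem_filter]
      refine ⟨?_, psi_mem R n hj hl.1 hsl⟩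
      have := hsl.1
      have := hsl.2.1
      simp only [grid, Finset.mem_product, Finset.mem_range] at hg ⊢
      omega
    · intro p hp
      rw [Finset.mem_coe, Finset.mem_filter] at hp
      obtain ⟨hg, hew⟩ := hp
      have hsl := phi_SL R n hj hew
      simp only [Finset.mem_coe, Finset.mem_biUnion]
      refine ⟨T R p + j, ?_, ?_⟩
      · rw [Finset.mem_Icc]
        have := hsl.1
        omega
      · rw [Finset.mem_filter]
        refine ⟨?_, hsl⟩
        simp only [grid, Finset.mem_product, Finset.mem_range] at hg ⊢
        omega
    · intro p hp
      simp only [Finset.mem_coe, Finset.mem_biUnion, Finset.mem_filter, Finset.mem_Icc] at hp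
      obtain ⟨l, hl, hg, hsl⟩ := hp
      have hT := T_of_SL R n hj hl.1 hsl
      beta_reduce
      rw [E_eq R n hj hl.1 hsl, hT]
      simp only [Nat.add_sub_cancel]
    · intro p hp
      rw [Finset.mem_coe, Finset.mem_filter] at hp
      obtain ⟨hg, hew⟩ := hp
      have hsl := phi_SL R n hj hew
      obtain ⟨ht1, ht2, _, _⟩ := T_spec R n hj hew
      have hE := E_eq R n hj (by omega : j ≤ T R p + j) hsl
      simp only at hE ⊢
      rw [hE]
      simp only [Nat.add_sub_cancel]
      ext <;> simp <;> omega
  · intro l hl l' hl' hne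
    simp only [Finset.disjoint_left, Finset.mem_filter]
    intro p hp hp'
    exact hne (SL_unique R n hp.2 hp'.2)



open Classical in
/-- the window predicate defining `Ccount`. -/
def Wnd (j : ℕ) (p : ℕ × ℕ) : Prop :=
  p.1 + j ≤ n ∧ p.2 + j ≤ n ∧ ∀ h < j, R (p.1 + h) (p.2 + h)

lemma Wnd_succ_imp {j : ℕ} {p : ℕ × ℕ} (h : Wnd R n (j + 1) p) : Wnd R n j p := by
  obtain ⟨c1, c2, w⟩ := h
  exact ⟨by omega, by omega, fun h hh => w h (by omega)⟩

lemma Wnd_and_not_succ_iff {j : ℕ} {p : ℕ × ℕ} :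
    (Wnd R n j p ∧ ¬ Wnd R n (j + 1) p) ↔ EndW R n j p := by
  constructor
  · rintro ⟨⟨c1, c2, w⟩, hnot⟩
    refine ⟨c1, c2, w, ?_⟩
    by_cases h1 : p.1 + j = n
    · exact Or.inl h1
    by_cases h2 : p.2 + j = n
    · exact Or.inr (Or.inl h2)
    refine Or.inr (Or.inr fun hrec => hnot ⟨by omega, by omega, fun h hh => ?_⟩)
    rcases Nat.lt_or_ge h j with hc | hc
    · exact w h hc
    · have : h = j := by omega
      subst this
      exact hrec
  · rintro ⟨c1, c2, w, e⟩
    refine ⟨⟨c1, c2, w⟩, fun ⟨d1, d2, w'⟩ => ?_⟩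
    have hrec := w' j (by omega)
    rcases e with e | e | e
    · omega
    · omega
    · exact e hrec

open Classical in
lemma split_card {j : ℕ} (hj : 1 ≤ j) :
    ((grid n).filter (Wnd R n (j + 1))).card + ((grid n).filter (EndW R n j)).card =
      ((grid n).filter (Wnd R n j)).card := by
  classical
  have h1 := Finset.card_filter_add_card_filter_not
    (s := (grid n).filter (Wnd R n j)) (p := Wnd R n (j + 1))
  rw [Finset.filter_filter, Finset.filter_filter] at h1
  rw [← h1]
  congr 1
  · congr 1
    apply Finset.filter_congr
    intro p _
    exact ⟨fun h => ⟨Wnd_succ_imp R n h, h⟩, fun h => h.2⟩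
  · congr 1
    apply Finset.filter_congr
    intro p _
    exact (Wnd_and_not_succ_iff R n).symm



variable {S : Type*} [MetricSpace S] (x : ℕ → S) (m : ℕ) (r : ℝ)

open Classical in
noncomputable def Lcount' (k n : ℕ) : ℕ :=
  ((Finset.range (n + 1) ×ˢ Finset.range (n + 1)).filter fun p =>
    p.1 + k ≤ n ∧ p.2 + k ≤ n ∧
    (∀ h < k, isRec m x r (p.1 + h) (p.2 + h)) ∧
    (p.1 = 0 ∨ p.2 = 0 ∨ ¬ isRec m x r (p.1 - 1) (p.2 - 1)) ∧
    (p.1 + k = n ∨ p.2 + k = n ∨ ¬ isRec m x r (p.1 + k) (p.2 + k))).card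

lemma Lcount'_eq (k n : ℕ) :
    Lcount' x m r k n = ((grid n).filter (SL (isRec m x r) n k)).card := by
  rw [Lcount', grid]
  congr 1
  apply Finset.filter_congr
  intro p _
  exact Iff.rfl

open Classical in
noncomputable def Ccount' (k n : ℕ) : ℕ :=
  ((Finset.range (n + 1) ×ˢ Finset.range (n + 1)).filter fun p =>
    p.1 + k ≤ n ∧ p.2 + k ≤ n ∧
    dmax (m + k - 1) (shift p.1 x) (shift p.2 x) ≤ r).card

lemma Ccount'_eq {k : ℕ} (n : ℕ) (hm : 1 ≤ m) (hk : 1 ≤ k) (hr : 0 ≤ r) :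
    Ccount' x m r k n = ((grid n).filter (Wnd (isRec m x r) n k)).card := by
  rw [Ccount', grid]
  congr 1
  apply Finset.filter_congr
  intro p _
  exact and_congr_right fun _ => and_congr_right fun _ => window_iff hr x hm hk p.1 p.2

lemma Lcount'_zero {k n : ℕ} (h : n < k) : Lcount' x m r k n = 0 := by
  rw [Lcount']
  rw [Finset.card_eq_zero, Finset.filter_eq_empty_iff]
  rintro p _ ⟨c1, _⟩
  omega

lemma Ccount'_zero {k n : ℕ} (h : n < k) : Ccount' x m r k n = 0 := by
  rw [Ccount']
  rw [Finset.card_eq_zero, Finset.filter_eq_empty_iff]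
  rintro p _ ⟨c1, _⟩
  omega

/-- the key natural-number identity. -/
lemma key_identity {j : ℕ} (n : ℕ) (hm : 1 ≤ m) (hj : 1 ≤ j) (hr : 0 ≤ r) :
    Ccount' x m r (j + 1) n + ∑ l ∈ Finset.Icc j n, Lcount' x m r l n =
      Ccount' x m r j n := by
  rw [Ccount'_eq x m r n hm (by omega) hr, Ccount'_eq x m r n hm hj hr]
  have hsum : ∑ l ∈ Finset.Icc j n, Lcount' x m r l n =
      ((grid n).filter (EndW (isRec m x r) n j)).card := by
    rw [← sum_SL_card (isRec m x r) n j hj]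
    exact Finset.sum_congr rfl fun l _ => Lcount'_eq x m r l n
  rw [hsum]
  exact split_card (isRec m x r) n hj

lemma telescope (f : ℕ → ℝ) (a : ℕ) : ∀ b, a ≤ b →
    ∑ j ∈ Finset.Icc a b, (f j - f (j + 1)) = f a - f (b + 1) := by
  intro b
  induction b with
  | zero =>
    intro h
    have : a = 0 := by omega
    subst this
    simp
  | succ b ih =>
    intro h
    rcases Nat.lt_or_ge a (b + 1) with hc | hc
    · rw [← Finset.insert_Icc_right_eq_Icc_add_one (by omega : a ≤ b + 1),
        Finset.sum_insert (by simp)]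
      rw [ih (by omega)]
      ring
    · have : a = b + 1 := by omega
      subst this
      simp

end RPAux

/-- For every metric space `(S,ρ)`, every sequence `x : ℕ → S`,
all integers `m, k, n ≥ 1` and every real `r ≥ 0`, one has
`(1/n²) Σ_{l ≥ k} L^m_l(x,n,r) = C^m_k(x,n,r) − C^m_{k+1}(x,n,r)`; consequently,
whenever `C^m_k(x,n,r) > C^m_{k+1}(x,n,r)`, the `k`-average line length satisfies
`LAVG^m_k(x,n,r) = k + C^m_{k+1}(x,n,r)/(C^m_k(x,n,r) − C^m_{k+1}(x,n,r))`. -/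
theorem lineCount_and_avgLineLength_eq_corrSums {S : Type*} [MetricSpace S] (x : ℕ → S)
    (m k n : ℕ) (hm : 1 ≤ m) (hk : 1 ≤ k) (hn : 1 ≤ n) (r : ℝ) (hr : 0 ≤ r) :
    (1 / (n : ℝ) ^ 2) * (∑' l : ℕ, if k ≤ l then (Lcount m l x n r : ℝ) else 0) =
      Csum m k x n r - Csum m (k + 1) x n r ∧
    (Csum m (k + 1) x n r < Csum m k x n r →
      LAVGsum m k x n r =
        (k : ℝ) + Csum m (k + 1) x n r / (Csum m k x n r - Csum m (k + 1) x n r)) := by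
  classical
  have hn0 : (0:ℝ) < (n:ℝ) := by exact_mod_cast hn
  have hn2 : (0:ℝ) < (n:ℝ)^2 := by positivity
  have h1 : ((n:ℝ)^2) ≠ 0 := ne_of_gt hn2
  have hLdef : ∀ l, RPAux.Lcount' x m r l n = Lcount m l x n r := fun l => rfl
  have hCdef : ∀ j, RPAux.Ccount' x m r j n = Ccount m j x n r := fun j => rfl
  set f : ℕ → ℝ := fun j => (Ccount m j x n r : ℝ) with hf
  have hL0 : ∀ l, n < l → Lcount m l x n r = 0 := fun l hl => by
    rw [← hLdef]; exact RPAux.Lcount'_zero x m r hl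
  have hC0 : ∀ j, n < j → Ccount m j x n r = 0 := fun j hj => by
    rw [← hCdef]; exact RPAux.Ccount'_zero x m r hj
  have keyR : ∀ j, 1 ≤ j →
      f j - f (j + 1) = ∑ l ∈ Finset.Icc j n, (Lcount m l x n r : ℝ) := by
    intro j hj
    have hnat := RPAux.key_identity x m r n hm hj hr
    simp only [hLdef, hCdef] at hnat
    have hcast : (Ccount m (j+1) x n r : ℝ) +
        ∑ l ∈ Finset.Icc j n, (Lcount m l x n r : ℝ) = (Ccount m j x n r : ℝ) := by
      exact_mod_cast congrArg (Nat.cast (R := ℝ)) hnat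
    simp only [hf]
    linarith
  have hts1 : (∑' l : ℕ, if k ≤ l then (Lcount m l x n r : ℝ) else 0)
      = ∑ l ∈ Finset.Icc k n, (Lcount m l x n r : ℝ) := by
    rw [tsum_eq_sum (s := Finset.range (n+1))
      (by intro b hb
          simp only [Finset.mem_range, not_lt] at hb
          simp [hL0 b (by omega)])]
    rw [← Finset.sum_filter]
    congr 1
    ext a
    simp only [Finset.mem_filter, Finset.mem_range, Finset.mem_Icc, Nat.lt_succ_iff]
    omega
  have hts2 : (∑' l : ℕ, if k ≤ l then (l : ℝ) * (Lcount m l x n r : ℝ) else 0)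
      = ∑ l ∈ Finset.Icc k n, (l : ℝ) * (Lcount m l x n r : ℝ) := by
    rw [tsum_eq_sum (s := Finset.range (n+1))
      (by intro b hb
          simp only [Finset.mem_range, not_lt] at hb
          simp [hL0 b (by omega)])]
    rw [← Finset.sum_filter]
    congr 1
    ext a
    simp only [Finset.mem_filter, Finset.mem_range, Finset.mem_Icc, Nat.lt_succ_iff]
    omega
  have part1 : (1 / (n : ℝ) ^ 2) *
      (∑' l : ℕ, if k ≤ l then (Lcount m l x n r : ℝ) else 0) =
      Csum m k x n r - Csum m (k + 1) x n r := by
    rw [hts1, ← keyR k hk]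
    simp only [Csum, hf]
    ring
  refine ⟨part1, ?_⟩
  intro hlt
  have hsub : ∑ l ∈ Finset.Icc k n, ((l - k : ℕ) : ℝ) * (Lcount m l x n r : ℝ)
      = f (k + 1) := by
    have step1 : ∀ l ∈ Finset.Icc k n, ((l - k : ℕ) : ℝ) * (Lcount m l x n r : ℝ)
        = ∑ j ∈ Finset.Icc (k+1) n, if j ≤ l then (Lcount m l x n r : ℝ) else 0 := by
      intro l hl
      rw [Finset.mem_Icc] at hl
      rw [← Finset.sum_filter]
      have hfil : (Finset.Icc (k+1) n).filter (fun j => j ≤ l) = Finset.Icc (k+1) l := by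
        ext a
        simp only [Finset.mem_filter, Finset.mem_Icc]
        omega
      rw [hfil, Finset.sum_const, Nat.card_Icc]
      rw [show l + 1 - (k + 1) = l - k by omega, nsmul_eq_mul]
    rw [Finset.sum_congr rfl step1, Finset.sum_comm]
    have step2 : ∀ j ∈ Finset.Icc (k+1) n,
        (∑ l ∈ Finset.Icc k n, if j ≤ l then (Lcount m l x n r : ℝ) else 0)
          = f j - f (j + 1) := by
      intro j hj
      rw [Finset.mem_Icc] at hj
      rw [← Finset.sum_filter]
      have hfil : (Finset.Icc k n).filter (fun l => j ≤ l) = Finset.Icc j n := by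
        ext a
        simp only [Finset.mem_filter, Finset.mem_Icc]
        omega
      rw [hfil]
      exact (keyR j (by omega)).symm
    rw [Finset.sum_congr rfl step2]
    rcases Nat.lt_or_ge n (k + 1) with hc | hc
    · rw [Finset.Icc_eq_empty (by omega), Finset.sum_empty]
      simp only [hf]
      rw [hC0 (k+1) hc]
      simp
    · rw [RPAux.telescope f (k+1) (n) hc]
      simp only [hf]
      rw [hC0 (n+1) (by omega)]
      simp
  have hRR : (∑' l : ℕ, if k ≤ l then (l : ℝ) * (Lcount m l x n r : ℝ) else 0)
      = (k : ℝ) * (f k - f (k + 1)) + f (k + 1) := by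
    rw [hts2]
    have expand : ∀ l ∈ Finset.Icc k n, (l : ℝ) * (Lcount m l x n r : ℝ)
        = (k : ℝ) * (Lcount m l x n r : ℝ) + ((l - k : ℕ) : ℝ) * (Lcount m l x n r : ℝ) := by
      intro l hl
      rw [Finset.mem_Icc] at hl
      have : ((l - k : ℕ) : ℝ) = (l : ℝ) - (k : ℝ) := by
        rw [Nat.cast_sub hl.1]
      rw [this]
      ring
    rw [Finset.sum_congr rfl expand, Finset.sum_add_distrib, ← Finset.mul_sum,
      ← keyR k hk, hsub]
  have efj : ∀ j, Csum m j x n r * (n:ℝ)^2 = f j := by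
    intro j
    rw [Csum, div_mul_cancel₀ _ h1]
  have hfgt : f (k + 1) < f k := by
    have := mul_lt_mul_of_pos_right hlt hn2
    rw [efj, efj] at this
    exact this
  have h2 : f k - f (k + 1) ≠ 0 := ne_of_gt (sub_pos.mpr hfgt)
  rw [LAVGsum, RRsum, hRR, hts1, ← keyR k hk]
  simp only [Csum, hf]
  rw [div_sub_div_same]
  field_simp
  have h3 : (Ccount m k x n r : ℝ) - Ccount m (k + 1) x n r ≠ 0 := h2
  rw [add_div, mul_div_cancel_right₀ _ h3]
end

section
/- Let S be a separable metric space and µ a Borel probability measure on the sequence space S^ℕ that is invariant and ergodic for the left shift. Then for every integer m ≥ 1, for µ-a.e. x ∈ S^ℕ and every r > 0, the maximal diagonal line length LMAX^m(x,n,r) = max{l < n : L^m_l(x,n,r) > 0} tends to infinity as n → ∞. -/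
open Filter Topology MeasureTheory

open Classical in
/-- The maximal diagonal line length `LMAX^m(x,n,r) = max{l < n : L^m_l(x,n,r) > 0}`. -/
noncomputable def LMAX {S : Type*} [MetricSpace S] (m : ℕ) (x : ℕ → S) (n : ℕ)
    (r : ℝ) : ℕ :=
  ((Finset.range n).filter fun l => 0 < Lcount m l x n r).sup id

lemma shift_iterate {S : Type*} (n : ℕ) (x : ℕ → S) : (shift 1)^[n] x = shift n x := by
  induction n with
  | zero => funext l; simp [shift]
  | succ n ih =>
      funext l
      rw [Function.iterate_succ', Function.comp_apply, ih]
      show x (n + (1 + l)) = x (n + 1 + l)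
      congr 1
      omega

lemma dmax_le' {S : Type*} [MetricSpace S] {h : ℕ} {x y : ℕ → S} {r : ℝ} (hr : 0 ≤ r)
    (H : ∀ l < h, dist (x l) (y l) ≤ r) : dmax h x y ≤ r := by
  rw [dmax, ← Real.coe_toNNReal r hr, NNReal.coe_le_coe]
  refine Finset.sup_le fun l hl => ?_
  rw [nndist_dist]
  exact Real.toNNReal_le_toNNReal (H l (Finset.mem_range.mp hl))

lemma ae_recurrence {S : Type*} [MetricSpace S]
    [TopologicalSpace.SeparableSpace S] [MeasurableSpace S] [BorelSpace S]
    (μ : Measure (ℕ → S)) [IsProbabilityMeasure μ]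
    (hmp : MeasureTheory.MeasurePreserving (shift 1) μ μ) (M : ℕ) (r : ℝ) (hr : 0 < r) :
    ∀ᵐ x ∂μ, ∃ j, 1 ≤ j ∧ ∀ l < M, dist (x l) (x (j + l)) ≤ r := by
  obtain ⟨D, hDc, hDd⟩ := TopologicalSpace.exists_countable_dense S
  haveI := hDc.to_subtype
  have hcons := hmp.conservative
  set A : (Fin M → D) → Set (ℕ → S) :=
    fun c => {x | ∀ l : Fin M, dist (x (l : ℕ)) ((c l : S)) < r / 2} with hA
  have hAm : ∀ c, MeasurableSet (A c) := by
    intro c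
    have : A c = ⋂ l : Fin M,
        (fun x : ℕ → S => x (l : ℕ)) ⁻¹' (Metric.ball ((c l : S)) (r / 2)) := by
      ext y; simp [hA, Set.mem_iInter]
    rw [this]
    exact MeasurableSet.iInter fun l => (measurable_pi_apply (l : ℕ)) measurableSet_ball
  have hrec : ∀ c, ∀ᵐ x ∂μ, x ∈ A c → ∃ᶠ n in atTop, (shift 1)^[n] x ∈ A c :=
    fun c => hcons.ae_mem_imp_frequently_image_mem (hAm c).nullMeasurableSet
  filter_upwards [ae_all_iff.2 hrec] with x hx
  have hc : ∃ c : Fin M → D, x ∈ A c := by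
    have h1 : ∀ l : Fin M, ∃ d : D, dist (x (l : ℕ)) (d : S) < r / 2 := by
      intro l
      obtain ⟨d, hd, hlt⟩ := Metric.mem_closure_iff.1 (hDd.closure_eq ▸ Set.mem_univ (x (l:ℕ)) :
        x (l : ℕ) ∈ closure D) (r / 2) (by positivity)
      exact ⟨⟨d, hd⟩, hlt⟩
    choose c hcc using h1
    exact ⟨c, hcc⟩
  obtain ⟨c, hxc⟩ := hc
  obtain ⟨j, hjA, hj1⟩ := ((hx c hxc).and_eventually (eventually_ge_atTop 1)).exists
  refine ⟨j, hj1, fun l hl => ?_⟩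
  have h1 := hxc ⟨l, hl⟩
  rw [shift_iterate] at hjA
  have h3 := hjA ⟨l, hl⟩
  have h4 : dist ((shift j x) l) ((c ⟨l, hl⟩ : S)) < r / 2 := h3
  have h5 : (shift j x) l = x (j + l) := rfl
  calc dist (x l) (x (j + l))
      ≤ dist (x l) ((c ⟨l, hl⟩ : S)) + dist ((c ⟨l, hl⟩ : S)) (x (j + l)) := dist_triangle _ _ _
    _ ≤ r / 2 + r / 2 := by
        refine add_le_add h1.le ?_
        rw [dist_comm, ← h5]; exact h4.le
    _ = r := by ring

/-- Let `S` be a separable metric space and `µ` a Borel probability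
measure on `S^ℕ` invariant and ergodic for the left shift. Then for every integer
`m ≥ 1`, for µ-a.e. `x` and every `r > 0`, the maximal diagonal line length
`LMAX^m(x,n,r)` tends to infinity as `n → ∞`. -/
theorem strong_law_maxLineLength {S : Type*} [MetricSpace S]
    [TopologicalSpace.SeparableSpace S] [MeasurableSpace S] [BorelSpace S]
    (μ : Measure (ℕ → S)) [IsProbabilityMeasure μ]
    (hμ : Ergodic (shift 1) μ) (m : ℕ) (hm : 1 ≤ m) :
    ∀ᵐ x ∂μ, ∀ r : ℝ, 0 < r →
      Tendsto (fun n : ℕ => LMAX m x n r) atTop atTop := by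
  classical
  have key : ∀ᵐ x ∂μ, ∀ M q : ℕ, ∃ j, 1 ≤ j ∧
      ∀ l < M, dist (x l) (x (j + l)) ≤ 1 / ((q : ℝ) + 1) := by
    rw [ae_all_iff]; intro M
    rw [ae_all_iff]; intro q
    exact ae_recurrence μ hμ.toMeasurePreserving M _ (by positivity)
  filter_upwards [key] with x hx r hr
  rw [tendsto_atTop_atTop]
  intro L
  obtain ⟨q, hq⟩ := exists_nat_one_div_lt hr
  obtain ⟨j, hj1, hjd⟩ := hx (m + (L + 1)) q
  refine ⟨j + L + 1, fun n hn => ?_⟩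
  set B := L + 1 with hB
  have hrec : ∀ h < B, isRec m x r h (j + h) := by
    intro h hh
    refine dmax_le' hr.le fun l hl => ?_
    show dist (x (h + l)) (x (j + h + l)) ≤ r
    have h1 : dist (x (h + l)) (x (j + (h + l))) ≤ 1 / ((q : ℝ) + 1) :=
      hjd (h + l) (by omega)
    rw [← add_assoc] at h1
    exact h1.trans hq.le
  set Q : ℕ → Prop := fun l => ∀ h < l, isRec m x r h (j + h) with hQdef
  set k := Nat.findGreatest Q (n - j) with hk
  have hkB : B ≤ k := Nat.le_findGreatest (by omega) hrec
  have hkb : k ≤ n - j := Nat.findGreatest_le _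
  have hQk : Q k := Nat.findGreatest_spec (P := Q) (by omega : B ≤ n - j) hrec
  have hend : j + k = n ∨ ¬ isRec m x r k (j + k) := by
    by_cases hjk : j + k = n
    · exact Or.inl hjk
    · right
      have hklt : k + 1 ≤ n - j := by omega
      have hnQ : ¬ Q (k + 1) :=
        Nat.findGreatest_is_greatest (by omega) hklt
      intro hcon
      apply hnQ
      intro h hh
      rcases Nat.lt_succ_iff_lt_or_eq.1 hh with h' | h'
      · exact hQk h h'
      · rw [h']; exact hcon
  have hpos : 0 < Lcount m k x n r := by
    rw [Lcount, Finset.card_pos]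
    refine ⟨(0, j), Finset.mem_filter.2 ⟨?_, ?_, ?_, ?_, ?_, ?_⟩⟩
    · exact Finset.mem_product.2 ⟨Finset.mem_range.2 (by omega), Finset.mem_range.2 (by omega)⟩
    · show 0 + k ≤ n; omega
    · show j + k ≤ n; omega
    · intro h hh
      show isRec m x r (0 + h) (j + h)
      rw [Nat.zero_add]
      exact hQk h hh
    · exact Or.inl rfl
    · rcases hend with h' | h'
      · exact Or.inr (Or.inl h')
      · refine Or.inr (Or.inr ?_)
        show ¬ isRec m x r (0 + k) (j + k)
        rwa [Nat.zero_add]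
  have hmem : k ∈ (Finset.range n).filter fun l => 0 < Lcount m l x n r :=
    Finset.mem_filter.2 ⟨Finset.mem_range.2 (by omega), hpos⟩
  have hle : k ≤ LMAX m x n r := by
    rw [LMAX]
    exact Finset.le_sup (f := id) hmem
  omega
end

section
/- Let S be a metric space and µ any Borel probability measure on S^ℕ. For all integers m, k ≥ 1 and every r ≥ 0, with h = k + m − 1: c^m_k(r) = c_h(r); rr^m_k(r) = rr_h(r) − (m − 1)·(c_h(r) − c_{h+1}(r)); and, whenever c_h(r) > c_{h+1}(r), lavg^m_k(r) = lavg_h(r) − (m − 1). Here c_h = c^1_h, rr_h = rr^1_h and lavg_h = lavg^1_h denote the non-embedded (m = 1) quantities. -/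
open Filter Topology MeasureTheory

/-- The correlation integral `c^m_k(r) = (µ×µ){(x,y) : d^m_k(x,y) ≤ r}`,
where `d^m_k = dmax (m + k - 1)` (the Chebyshev embedding metric). -/
noncomputable def cInt {S : Type*} [MetricSpace S] [MeasurableSpace S]
    (μ : Measure (ℕ → S)) (m k : ℕ) (r : ℝ) : ℝ :=
  ((μ.prod μ) {p : (ℕ → S) × (ℕ → S) | dmax (m + k - 1) p.1 p.2 ≤ r}).toReal

/-- The recurrence integral `rr^m_k(r) = k·c^m_k(r) − (k − 1)·c^m_{k+1}(r)`. -/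
noncomputable def rrInt {S : Type*} [MetricSpace S] [MeasurableSpace S]
    (μ : Measure (ℕ → S)) (m k : ℕ) (r : ℝ) : ℝ :=
  (k : ℝ) * cInt μ m k r - ((k : ℝ) - 1) * cInt μ m (k + 1) r

/-- The asymptotic determinism `det^m_k(r) = rr^m_k(r)/rr^m_1(r)`. -/
noncomputable def detInt {S : Type*} [MetricSpace S] [MeasurableSpace S]
    (μ : Measure (ℕ → S)) (m k : ℕ) (r : ℝ) : ℝ :=
  rrInt μ m k r / rrInt μ m 1 r

/-- The mean diagonal line length
`lavg^m_k(r) = k + c^m_{k+1}(r)/(c^m_k(r) − c^m_{k+1}(r))`. -/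
noncomputable def lavgInt {S : Type*} [MetricSpace S] [MeasurableSpace S]
    (μ : Measure (ℕ → S)) (m k : ℕ) (r : ℝ) : ℝ :=
  (k : ℝ) + cInt μ m (k + 1) r / (cInt μ m k r - cInt μ m (k + 1) r)

/-- `cInt` depends on `m, k` only through `m + k - 1`. -/
theorem cInt_congr {S : Type*} [MetricSpace S] [MeasurableSpace S]
    (μ : Measure (ℕ → S)) {m k m' k' : ℕ} (h : m + k - 1 = m' + k' - 1) (r : ℝ) :
    cInt μ m k r = cInt μ m' k' r := by
  unfold cInt; rw [h]

/-- Let `S` be a metric space and `µ` any Borel probability measure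
on `S^ℕ`. For all integers `m, k ≥ 1` and every `r ≥ 0`, with `h = k + m − 1`:
`c^m_k(r) = c_h(r)`; `rr^m_k(r) = rr_h(r) − (m − 1)·(c_h(r) − c_{h+1}(r))`; and,
whenever `c_h(r) > c_{h+1}(r)`, `lavg^m_k(r) = lavg_h(r) − (m − 1)`. Here the
subscripted quantities are the non-embedded (`m = 1`) ones. -/
theorem embedded_asymptotic_eq_nonembedded {S : Type*} [MetricSpace S] [MeasurableSpace S]
    (μ : Measure (ℕ → S)) [IsProbabilityMeasure μ]
    (m k : ℕ) (hm : 1 ≤ m) (hk : 1 ≤ k) (r : ℝ) (hr : 0 ≤ r) :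
    cInt μ m k r = cInt μ 1 (k + m - 1) r ∧
    rrInt μ m k r =
      rrInt μ 1 (k + m - 1) r -
        ((m : ℝ) - 1) * (cInt μ 1 (k + m - 1) r - cInt μ 1 (k + m) r) ∧
    (cInt μ 1 (k + m) r < cInt μ 1 (k + m - 1) r →
      lavgInt μ m k r = lavgInt μ 1 (k + m - 1) r - ((m : ℝ) - 1)) := by
  have e1 : cInt μ m k r = cInt μ 1 (k + m - 1) r := cInt_congr μ (by omega) r
  have e2 : cInt μ m (k + 1) r = cInt μ 1 (k + m) r := cInt_congr μ (by omega) r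
  have e3 : cInt μ 1 (k + m - 1 + 1) r = cInt μ 1 (k + m) r := cInt_congr μ (by omega) r
  have hcast : ((k + m - 1 : ℕ) : ℝ) = (k : ℝ) + m - 1 := by
    have h1 : k + m - 1 + 1 = k + m := by omega
    have h2 := congrArg (Nat.cast (R := ℝ)) h1
    push_cast at h2; linarith
  refine ⟨e1, ?_, ?_⟩
  · unfold rrInt; rw [e1, e2, e3, hcast]; ring
  · intro hlt
    unfold lavgInt; rw [e1, e2, e3, hcast]; ring
end

section
/- Let S be a metric space, ν a Borel probability measure on S, and µ = ν^{⊗ℕ} the infinite product measure on S^ℕ (the distribution of an iid process). Fix r ≥ 0 and set α = (ν×ν){(u,v) : ρ(u,v) ≤ r}. Then for all integers m, k ≥ 1: c^m_k(r) = α^{m+k−1}; if α > 0 then det^m_k(r) = α^{k−1}·(k − (k − 1)·α); and if 0 < α < 1 then lavg^m_k(r) = k + α/(1 − α). In particular det^m_k(r) and lavg^m_k(r) do not depend on the embedding dimension m. -/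
open Filter Topology MeasureTheory

namespace IidAux

open Set

variable {S : Type*} [MeasurableSpace S]

/-- Splitting a sequence into its first `h` coordinates and its tail. -/
def splitE (S : Type*) [MeasurableSpace S] (h : ℕ) : (ℕ → S) ≃ᵐ (Fin h → S) × (ℕ → S) where
  toFun x := (fun i => x ↑i, fun n => x (n + h))
  invFun p n := if hn : n < h then p.1 ⟨n, hn⟩ else p.2 (n - h)
  left_inv x := by
    funext n
    by_cases hn : n < h
    · simp [hn]
    · simp [hn, Nat.sub_add_cancel (le_of_not_gt hn)]
  right_inv p := by
    refine Prod.ext ?_ ?_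
    · funext i
      simp [i.isLt]
    · funext n
      have : ¬ (n + h < h) := by omega
      simp [this]
  measurable_toFun :=
    (measurable_pi_lambda _ fun i => measurable_pi_apply _).prodMk
      (measurable_pi_lambda _ fun n => measurable_pi_apply _)
  measurable_invFun := measurable_pi_lambda _ fun n => by
    show Measurable fun p : (Fin h → S) × (ℕ → S) =>
      if hn : n < h then p.1 ⟨n, hn⟩ else p.2 (n - h)
    by_cases hn : n < h
    · have : (fun p : (Fin h → S) × (ℕ → S) =>
          if hn : n < h then p.1 ⟨n, hn⟩ else p.2 (n - h)) = fun p => p.1 ⟨n, hn⟩ := by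
        funext p; exact dif_pos hn
      rw [this]
      exact (measurable_pi_apply _).comp measurable_fst
    · have : (fun p : (Fin h → S) × (ℕ → S) =>
          if hn : n < h then p.1 ⟨n, hn⟩ else p.2 (n - h)) = fun p => p.2 (n - h) := by
        funext p; exact dif_neg hn
      rw [this]
      exact (measurable_pi_apply _).comp measurable_snd

/-- Cylinder sets on `ℕ → S`. -/
def cyl (S : Type*) [MeasurableSpace S] : Set (Set (ℕ → S)) :=
  {C | ∃ n : ℕ, ∃ B : Set (Fin n → S), MeasurableSet B ∧ C = (fun x (i : Fin n) => x ↑i) ⁻¹' B}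

lemma isPiSystem_cyl : IsPiSystem (cyl S) := by
  rintro _ ⟨n1, B1, hB1, rfl⟩ _ ⟨n2, B2, hB2, rfl⟩ _
  refine ⟨max n1 n2,
    (fun (z : Fin (max n1 n2) → S) (i : Fin n1) => z (Fin.castLE (le_max_left n1 n2) i)) ⁻¹' B1 ∩
    (fun (z : Fin (max n1 n2) → S) (i : Fin n2) => z (Fin.castLE (le_max_right n1 n2) i)) ⁻¹' B2,
    ?_, ?_⟩
  · exact (hB1.preimage (measurable_pi_lambda _ fun i => measurable_pi_apply _)).inter
      (hB2.preimage (measurable_pi_lambda _ fun i => measurable_pi_apply _))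
  · rfl

lemma generateFrom_cyl : MeasurableSpace.generateFrom (cyl S) = MeasurableSpace.pi := by
  apply le_antisymm
  · rw [MeasurableSpace.generateFrom_le_iff]
    rintro _ ⟨n, B, hB, rfl⟩
    exact (measurable_pi_lambda (fun (x : ℕ → S) (i : Fin n) => x ↑i)
      fun i => measurable_pi_apply _) hB
  · show (⨆ i : ℕ, MeasurableSpace.comap (fun x : ℕ → S => x i)
        (inferInstance : MeasurableSpace S)) ≤ MeasurableSpace.generateFrom (cyl S)
    refine iSup_le fun i => ?_
    rw [MeasurableSpace.comap_le_iff_le_map]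
    intro t ht
    show MeasurableSet[MeasurableSpace.generateFrom (cyl S)] ((fun x : ℕ → S => x i) ⁻¹' t)
    exact MeasurableSpace.measurableSet_generateFrom
      ⟨i + 1, (fun z : Fin (i+1) → S => z (Fin.last i)) ⁻¹' t,
        (measurable_pi_apply (Fin.last i)) ht, rfl⟩


/-- The head-tail projection at level `h + n`, grouped. -/
def qE (S : Type*) [MeasurableSpace S] (h n : ℕ) :
    (Fin (h + n) → S) ≃ᵐ (Fin h → S) × (Fin n → S) :=
  (MeasurableEquiv.piCongrLeft (fun _ => S) finSumFinEquiv).symm.trans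
    (MeasurableEquiv.sumPiEquivProdPi fun _ => S)

lemma qE_apply {h n : ℕ} (z : Fin (h + n) → S) :
    qE S h n z = (fun i : Fin h => z (Fin.castAdd n i), fun j : Fin n => z (Fin.natAdd h j)) := by
  refine Prod.ext ?_ ?_
  · funext i
    show ((MeasurableEquiv.piCongrLeft (fun _ => S) finSumFinEquiv).symm z) (Sum.inl i)
      = z (Fin.castAdd n i)
    rw [show ((MeasurableEquiv.piCongrLeft (fun _ => S) finSumFinEquiv).symm z)
        = (Equiv.piCongrLeft (fun _ => S) finSumFinEquiv).symm z from rfl]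
    rw [Equiv.piCongrLeft_symm_apply, finSumFinEquiv_apply_left]
  · funext j
    show ((MeasurableEquiv.piCongrLeft (fun _ => S) finSumFinEquiv).symm z) (Sum.inr j)
      = z (Fin.natAdd h j)
    rw [show ((MeasurableEquiv.piCongrLeft (fun _ => S) finSumFinEquiv).symm z)
        = (Equiv.piCongrLeft (fun _ => S) finSumFinEquiv).symm z from rfl]
    rw [Equiv.piCongrLeft_symm_apply, finSumFinEquiv_apply_right]

lemma qE_mp (ν : Measure S) [IsProbabilityMeasure ν] (h n : ℕ) :
    MeasurePreserving (qE S h n) (Measure.pi fun _ : Fin (h + n) => ν)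
      ((Measure.pi fun _ : Fin h => ν).prod (Measure.pi fun _ : Fin n => ν)) := by
  have e1 := MeasureTheory.measurePreserving_piCongrLeft
    (fun _ : Fin (h + n) => ν) finSumFinEquiv
  have e2 := MeasureTheory.measurePreserving_sumPiEquivProdPi
    (fun _ : Fin h ⊕ Fin n => ν)
  exact e2.comp (e1.symm _)

/-- Pushing `pi` measure through `qE`, for arbitrary sets. -/
lemma pi_qE (ν : Measure S) [IsProbabilityMeasure ν] {h n : ℕ}
    (B : Set (Fin h → S)) (B' : Set (Fin n → S)) :
    Measure.pi (fun _ : Fin (h + n) => ν) (qE S h n ⁻¹' (B ×ˢ B'))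
      = Measure.pi (fun _ : Fin h => ν) B * Measure.pi (fun _ : Fin n => ν) B' := by
  rw [← MeasurableEquiv.map_apply (qE S h n), (qE_mp ν h n).map_eq, Measure.prod_prod]

variable {ν : Measure S} [IsProbabilityMeasure ν]
  {μ : Measure (ℕ → S)} [IsProbabilityMeasure μ]

lemma map_split
    (hiid : ∀ n : ℕ, μ.map (fun x (i : Fin n) => x (i : ℕ)) = Measure.pi fun _ : Fin n => ν)
    (h : ℕ) :
    (Measure.pi fun _ : Fin h => ν).prod (μ.map fun x n => x (n + h))
      = μ.map (splitE S h) := by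
  have hτm : Measurable (fun (x : ℕ → S) n => x (n + h)) :=
    measurable_pi_lambda _ fun n => measurable_pi_apply _
  haveI : IsProbabilityMeasure (μ.map fun x n => x (n + h)) :=
    Measure.isProbabilityMeasure_map hτm.aemeasurable
  refine Measure.prod_eq_generateFrom MeasurableSpace.generateFrom_measurableSet
    generateFrom_cyl MeasurableSpace.isPiSystem_measurableSet isPiSystem_cyl
    (Measure.toFiniteSpanningSetsIn _)
    ⟨fun _ => univ, fun _ => ⟨0, univ, MeasurableSet.univ, (preimage_univ).symm⟩,
      fun _ => by simp, by rw [iUnion_const]⟩ ?_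
  rintro B hB _ ⟨n, B', hB', rfl⟩
  have hBm : MeasurableSet B := hB
  have hproj : Measurable (fun (x : ℕ → S) (i : Fin (h + n)) => x ↑i) :=
    measurable_pi_lambda _ fun i => measurable_pi_apply _
  have hW : MeasurableSet (qE S h n ⁻¹' (B ×ˢ B')) :=
    (qE S h n).measurable (hBm.prod hB')
  have hW' : MeasurableSet (qE S h n ⁻¹' ((univ : Set (Fin h → S)) ×ˢ B')) :=
    (qE S h n).measurable (MeasurableSet.univ.prod hB')
  have hfun : ∀ x : ℕ → S,
      (fun j : Fin n => x (h + ↑j)) = fun j : Fin n => x (↑j + h) := by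
    intro x; funext j; rw [Nat.add_comm]
  have hset : (splitE S h) ⁻¹' (B ×ˢ ((fun x (i : Fin n) => x ↑i) ⁻¹' B'))
      = (fun (x : ℕ → S) (i : Fin (h + n)) => x ↑i) ⁻¹' (qE S h n ⁻¹' (B ×ˢ B')) := by
    ext x
    simp only [mem_preimage, mem_prod, qE_apply, Fin.coe_castAdd, Fin.coe_natAdd]
    rw [hfun x]
    exact Iff.rfl
  have hset' : (fun x (n' : ℕ) => x (n' + h)) ⁻¹' ((fun x (i : Fin n) => x ↑i) ⁻¹' B')
      = (fun (x : ℕ → S) (i : Fin (h + n)) => x ↑i)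
          ⁻¹' (qE S h n ⁻¹' ((univ : Set (Fin h → S)) ×ˢ B')) := by
    ext x
    simp only [mem_preimage, mem_prod, qE_apply, Fin.coe_castAdd, Fin.coe_natAdd,
      mem_univ, true_and]
    rw [hfun x]
  have hcylm : MeasurableSet ((fun (x : ℕ → S) (i : Fin n) => x ↑i) ⁻¹' B') :=
    hB'.preimage (measurable_pi_lambda _ fun i => measurable_pi_apply _)
  rw [MeasurableEquiv.map_apply, hset, ← Measure.map_apply hproj hW, hiid (h + n), pi_qE,
    Measure.map_apply hτm hcylm, hset', ← Measure.map_apply hproj hW', hiid (h + n), pi_qE]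
  simp


section Regroup

variable {X1 X2 X3 X4 : Type*} [MeasurableSpace X1] [MeasurableSpace X2]
  [MeasurableSpace X3] [MeasurableSpace X4]

/-- Regrouping `(a,b),(c,d) ↦ (a,c),(b,d)` as a measurable equivalence. -/
def regroup : (X1 × X2) × (X3 × X4) ≃ᵐ (X1 × X3) × (X2 × X4) :=
  MeasurableEquiv.prodAssoc.trans <|
    ((MeasurableEquiv.refl X1).prodCongr
      ((MeasurableEquiv.prodAssoc.symm.trans
        ((MeasurableEquiv.prodComm : X2 × X3 ≃ᵐ X3 × X2).prodCongr (MeasurableEquiv.refl X4))).trans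
        MeasurableEquiv.prodAssoc)).trans
    MeasurableEquiv.prodAssoc.symm

lemma regroup_apply (p : (X1 × X2) × (X3 × X4)) :
    regroup p = ((p.1.1, p.2.1), (p.1.2, p.2.2)) := rfl

lemma regroup_mp (m1 : Measure X1) (m2 : Measure X2) (m3 : Measure X3) (m4 : Measure X4)
    [SFinite m1] [SFinite m2] [SFinite m3] [SFinite m4] :
    MeasurePreserving (regroup (X1 := X1) (X2 := X2) (X3 := X3) (X4 := X4))
      ((m1.prod m2).prod (m3.prod m4)) ((m1.prod m3).prod (m2.prod m4)) := by
  have h1 : MeasurePreserving (MeasurableEquiv.prodAssoc : (X1 × X2) × (X3 × X4) ≃ᵐ _)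
      ((m1.prod m2).prod (m3.prod m4)) (m1.prod (m2.prod (m3.prod m4))) :=
    measurePreserving_prodAssoc m1 m2 (m3.prod m4)
  have h2a : MeasurePreserving
      (MeasurableEquiv.prodAssoc.symm : X2 × (X3 × X4) ≃ᵐ (X2 × X3) × X4)
      (m2.prod (m3.prod m4)) ((m2.prod m3).prod m4) :=
    (measurePreserving_prodAssoc m2 m3 m4).symm _
  have h2b : MeasurePreserving
      (Prod.map (Prod.swap : X2 × X3 → X3 × X2) (id : X4 → X4))
      ((m2.prod m3).prod m4) ((m3.prod m2).prod m4) :=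
    (Measure.measurePreserving_swap :
      MeasurePreserving Prod.swap (m2.prod m3) (m3.prod m2)).prod (MeasurePreserving.id m4)
  have h2c : MeasurePreserving (MeasurableEquiv.prodAssoc : (X3 × X2) × X4 ≃ᵐ _)
      ((m3.prod m2).prod m4) (m3.prod (m2.prod m4)) :=
    measurePreserving_prodAssoc m3 m2 m4
  have h2 : MeasurePreserving
      (Prod.map (id : X1 → X1)
        (⇑(MeasurableEquiv.prodAssoc : (X3 × X2) × X4 ≃ᵐ _) ∘
          (Prod.map (Prod.swap : X2 × X3 → X3 × X2) (id : X4 → X4) ∘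
            ⇑(MeasurableEquiv.prodAssoc.symm : X2 × (X3 × X4) ≃ᵐ (X2 × X3) × X4))))
      (m1.prod (m2.prod (m3.prod m4))) (m1.prod (m3.prod (m2.prod m4))) :=
    (MeasurePreserving.id m1).prod ((h2c.comp h2b).comp h2a)
  have h3 : MeasurePreserving
      (MeasurableEquiv.prodAssoc.symm : X1 × (X3 × (X2 × X4)) ≃ᵐ (X1 × X3) × (X2 × X4))
      (m1.prod (m3.prod (m2.prod m4))) ((m1.prod m3).prod (m2.prod m4)) :=
    (measurePreserving_prodAssoc m1 m3 (m2.prod m4)).symm _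
  exact (h3.comp (h2.comp h1) : _)

end Regroup

lemma joint
    (hiid : ∀ n : ℕ, μ.map (fun x (i : Fin n) => x (i : ℕ)) = Measure.pi fun _ : Fin n => ν)
    (h : ℕ) (A : Set (S × S)) :
    (μ.prod μ) {p : (ℕ → S) × (ℕ → S) | ∀ i : Fin h, (p.1 ↑i, p.2 ↑i) ∈ A}
      = ((ν.prod ν) A) ^ h := by
  classical
  have hτm : Measurable (fun (x : ℕ → S) n => x (n + h)) :=
    measurable_pi_lambda _ fun n => measurable_pi_apply _
  set τ : Measure (ℕ → S) := μ.map (fun x n => x (n + h)) with hτ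
  haveI : IsProbabilityMeasure τ := Measure.isProbabilityMeasure_map hτm.aemeasurable
  -- total equivalence
  set T : (ℕ → S) × (ℕ → S) ≃ᵐ (Fin h → S × S) × ((ℕ → S) × (ℕ → S)) :=
    (((splitE S h).prodCongr (splitE S h)).trans regroup).trans
      (((MeasurableEquiv.arrowProdEquivProdArrow S S (Fin h)).symm).prodCongr
        (MeasurableEquiv.refl _)) with hT
  have hmap : (μ.prod μ).map T
      = (Measure.pi fun _ : Fin h => ν.prod ν).prod (τ.prod τ) := by
    have s1 : (μ.prod μ).map (Prod.map (splitE S h) (splitE S h))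
        = ((Measure.pi fun _ : Fin h => ν).prod τ).prod
            ((Measure.pi fun _ : Fin h => ν).prod τ) := by
      rw [← Measure.map_prod_map _ _ (splitE S h).measurable (splitE S h).measurable,
        ← map_split hiid h]
    have s2 := regroup_mp (Measure.pi fun _ : Fin h => ν) τ
      (Measure.pi fun _ : Fin h => ν) τ
    have s3 : MeasurePreserving
        (Prod.map (⇑(MeasurableEquiv.arrowProdEquivProdArrow S S (Fin h)).symm)
          (id : (ℕ → S) × (ℕ → S) → _))
        (((Measure.pi fun _ : Fin h => ν).prod (Measure.pi fun _ : Fin h => ν)).prod (τ.prod τ))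
        ((Measure.pi fun _ : Fin h => ν.prod ν).prod (τ.prod τ)) :=
      ((measurePreserving_arrowProdEquivProdArrow S S (Fin h)
        (fun _ => ν) (fun _ => ν)).symm _).prod (MeasurePreserving.id _)
    have hTcoe : (⇑T) =
        (Prod.map (⇑(MeasurableEquiv.arrowProdEquivProdArrow S S (Fin h)).symm)
            (id : (ℕ → S) × (ℕ → S) → _)) ∘
          (⇑(regroup
              (X1 := Fin h → S) (X2 := ℕ → S) (X3 := Fin h → S) (X4 := ℕ → S)) ∘
            (Prod.map (⇑(splitE S h)) (⇑(splitE S h)))) := rfl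
    have hm1 : Measurable (Prod.map (⇑(splitE S h)) (⇑(splitE S h))) :=
      (splitE S h).measurable.prodMap (splitE S h).measurable
    have hm2 : Measurable
        (⇑(regroup (X1 := Fin h → S) (X2 := ℕ → S) (X3 := Fin h → S) (X4 := ℕ → S))) :=
      MeasurableEquiv.measurable _
    have hm3 : Measurable
        (Prod.map (⇑(MeasurableEquiv.arrowProdEquivProdArrow S S (Fin h)).symm)
          (id : (ℕ → S) × (ℕ → S) → _)) :=
      (MeasurableEquiv.measurable _).prodMap measurable_id
    rw [hTcoe, ← Measure.map_map hm3 (hm2.comp hm1), ← Measure.map_map hm2 hm1,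
      s1, s2.map_eq, s3.map_eq]
  have hset : {p : (ℕ → S) × (ℕ → S) | ∀ i : Fin h, (p.1 ↑i, p.2 ↑i) ∈ A}
      = T ⁻¹' ((univ.pi fun _ : Fin h => A) ×ˢ univ) := by
    ext p
    simp only [Set.mem_setOf_eq, Set.mem_preimage, Set.mem_prod, Set.mem_univ, and_true,
      Set.mem_pi, true_implies]
    exact Iff.rfl
  rw [hset, ← MeasurableEquiv.map_apply T, hmap, Measure.prod_prod, Measure.pi_pi]
  simp [Finset.prod_const]


end IidAux



namespace IidAux

lemma dmax_le_iff {S : Type*} [MetricSpace S] {h : ℕ} {x y : ℕ → S} {r : ℝ} (hr : 0 ≤ r) :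
    dmax h x y ≤ r ↔ ∀ i : Fin h, dist (x ↑i) (y ↑i) ≤ r := by
  constructor
  · intro H i
    calc dist (x ↑i) (y ↑i) = ((nndist (x ↑i) (y ↑i) : NNReal) : ℝ) := (coe_nndist _ _).symm
      _ ≤ dmax h x y := by
          exact NNReal.coe_le_coe.2
            (Finset.le_sup (f := fun l => nndist (x l) (y l)) (Finset.mem_range.2 i.isLt))
      _ ≤ r := H
  · intro H
    rw [dmax, ← Real.coe_toNNReal r hr, NNReal.coe_le_coe]
    refine Finset.sup_le fun l hl => ?_
    rw [← NNReal.coe_le_coe, coe_nndist, Real.coe_toNNReal r hr]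
    exact H ⟨l, Finset.mem_range.1 hl⟩

end IidAux

/-- Let `S` be a metric space, `ν` a Borel probability measure on `S`,
and `µ` the infinite product measure `ν^{⊗ℕ}` on `S^ℕ` (characterized by its
finite-dimensional marginals being the finite products `ν^{⊗n}`). Fix `r ≥ 0` and set
`α = (ν×ν){(u,v) : ρ(u,v) ≤ r}`. Then for all integers `m, k ≥ 1`:
`c^m_k(r) = α^{m+k−1}`; if `α > 0` then `det^m_k(r) = α^{k−1}·(k − (k − 1)·α)`; and if
`0 < α < 1` then `lavg^m_k(r) = k + α/(1 − α)`. In particular `det^m_k(r)` and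
`lavg^m_k(r)` do not depend on the embedding dimension `m`. -/
theorem iid_asymptotics {S : Type*} [MetricSpace S] [MeasurableSpace S] [BorelSpace S]
    (ν : Measure S) [IsProbabilityMeasure ν]
    (μ : Measure (ℕ → S)) [IsProbabilityMeasure μ]
    (hiid : ∀ n : ℕ, μ.map (fun x (i : Fin n) => x (i : ℕ)) =
      Measure.pi fun _ : Fin n => ν)
    (r : ℝ) (hr : 0 ≤ r) :
    ∀ m k : ℕ, 1 ≤ m → 1 ≤ k →
      cInt μ m k r = (((ν.prod ν) {p : S × S | dist p.1 p.2 ≤ r}).toReal) ^ (m + k - 1) ∧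
      (0 < ((ν.prod ν) {p : S × S | dist p.1 p.2 ≤ r}).toReal →
        detInt μ m k r =
          (((ν.prod ν) {p : S × S | dist p.1 p.2 ≤ r}).toReal) ^ (k - 1) *
            ((k : ℝ) - ((k : ℝ) - 1) *
              ((ν.prod ν) {p : S × S | dist p.1 p.2 ≤ r}).toReal)) ∧
      (0 < ((ν.prod ν) {p : S × S | dist p.1 p.2 ≤ r}).toReal →
        ((ν.prod ν) {p : S × S | dist p.1 p.2 ≤ r}).toReal < 1 →
        lavgInt μ m k r =
          (k : ℝ) + ((ν.prod ν) {p : S × S | dist p.1 p.2 ≤ r}).toReal /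
            (1 - ((ν.prod ν) {p : S × S | dist p.1 p.2 ≤ r}).toReal)) := by
  intro m k hm hk
  have hAfin : (ν.prod ν) {p : S × S | dist p.1 p.2 ≤ r} ≠ ⊤ := (measure_lt_top _ _).ne
  set a : ℝ := ((ν.prod ν) {p : S × S | dist p.1 p.2 ≤ r}).toReal with ha
  have key : ∀ h : ℕ, (μ.prod μ) {p : (ℕ → S) × (ℕ → S) | dmax h p.1 p.2 ≤ r}
      = ((ν.prod ν) {p : S × S | dist p.1 p.2 ≤ r}) ^ h := by
    intro h
    have hj := IidAux.joint (ν := ν) (μ := μ) hiid h {p : S × S | dist p.1 p.2 ≤ r}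
    rw [← hj]
    congr 1
    ext p
    simp only [Set.mem_setOf_eq]
    exact IidAux.dmax_le_iff hr
  have hcInt : ∀ m' k' : ℕ, cInt μ m' k' r = a ^ (m' + k' - 1) := by
    intro m' k'
    rw [cInt, key, ENNReal.toReal_pow]
  obtain ⟨k', rfl⟩ : ∃ k'', k = k'' + 1 := ⟨k - 1, by omega⟩
  have e1 : m + (k' + 1) - 1 = m + k' := by omega
  have e2 : m + (k' + 1 + 1) - 1 = m + k' + 1 := by omega
  have e3 : m + 1 - 1 = m := by omega
  have e4 : m + 2 - 1 = m + 1 := by omega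
  have c1 : cInt μ m (k' + 1) r = a ^ (m + k') := by rw [hcInt, e1]
  have c2 : cInt μ m (k' + 1 + 1) r = a ^ (m + k' + 1) := by rw [hcInt, e2]
  have c0 : cInt μ m 1 r = a ^ m := by rw [hcInt, e3]
  have c02 : cInt μ m (1 + 1) r = a ^ (m + 1) := by
    rw [hcInt, show m + (1 + 1) - 1 = m + 1 from by omega]
  refine ⟨hcInt m (k' + 1), ?_, ?_⟩
  · intro hapos
    have ham : a ^ m ≠ 0 := pow_ne_zero _ (ne_of_gt hapos)
    rw [detInt, rrInt, rrInt, c1, c2, c0, c02]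
    have hden : (1 : ℕ) • (1:ℝ) = 1 := by simp
    have hd : ((1 : ℕ) : ℝ) * a ^ m - (((1 : ℕ) : ℝ) - 1) * a ^ (m + 1) = a ^ m := by
      push_cast; ring
    rw [hd, div_eq_iff ham]
    simp only [Nat.add_sub_cancel]
    push_cast
    rw [pow_succ, pow_add]
    ring
  · intro hapos halt1
    have h0 : a ^ (m + k') ≠ 0 := pow_ne_zero _ (ne_of_gt hapos)
    rw [lavgInt, c1, c2]
    congr 1
    rw [pow_succ, show a ^ (m + k') - a ^ (m + k') * a = a ^ (m + k') * (1 - a) by ring,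
      mul_div_mul_left _ _ h0]
end

section
/- Let S be a separable metric space, ν a Borel probability measure on S, and µ = ν^{⊗ℕ} the infinite product measure on S^ℕ (the distribution of an iid process). Let θ ∈ (0,1), k ≥ 1, and for every integer m ≥ 1 let r_m > 0 be such that rr^m_1(r_m) = θ. Then lim_{m→∞} det^m_k(r_m) = 1 and lim_{m→∞} lavg^m_k(r_m) = ∞. -/
open Filter Topology MeasureTheory

/-- Let `S` be a separable metric space, `ν` a Borel probability
measure on `S`, and `µ = ν^{⊗ℕ}` the distribution of an iid process (characterized by
its finite-dimensional marginals). Let `θ ∈ (0,1)`, `k ≥ 1`, and for every integer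
`m ≥ 1` let `r_m > 0` be such that `rr^m_1(r_m) = θ`. Then
`lim_{m→∞} det^m_k(r_m) = 1` and `lim_{m→∞} lavg^m_k(r_m) = ∞`. -/
theorem spurious_structures {S : Type*} [MetricSpace S] [TopologicalSpace.SeparableSpace S]
    [MeasurableSpace S] [BorelSpace S]
    (ν : Measure S) [IsProbabilityMeasure ν]
    (μ : Measure (ℕ → S)) [IsProbabilityMeasure μ]
    (hiid : ∀ n : ℕ, μ.map (fun x (i : Fin n) => x (i : ℕ)) =
      Measure.pi fun _ : Fin n => ν)
    (θ : ℝ) (hθ0 : 0 < θ) (hθ1 : θ < 1) (k : ℕ) (hk : 1 ≤ k)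
    (r : ℕ → ℝ) (hr : ∀ m : ℕ, 1 ≤ m → 0 < r m ∧ rrInt μ m 1 (r m) = θ) :
    Filter.Tendsto (fun m : ℕ => detInt μ m k (r m)) Filter.atTop (nhds 1) ∧
    Filter.Tendsto (fun m : ℕ => lavgInt μ m k (r m)) Filter.atTop Filter.atTop := by
  haveI : SecondCountableTopology S := UniformSpace.secondCountable_of_separable S
  -- the key product formula
  have key : ∀ (h : ℕ) (s : ℝ), 0 ≤ s →
      (μ.prod μ) {p : (ℕ → S) × (ℕ → S) | dmax h p.1 p.2 ≤ s}
        = ((ν.prod ν) {q : S × S | dist q.1 q.2 ≤ s}) ^ h := by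
    intro h s hs
    set A : Set (S × S) := {q : S × S | dist q.1 q.2 ≤ s} with hA
    have hAmeas : MeasurableSet A := (isClosed_le continuous_dist continuous_const).measurableSet
    set B : Set (Fin h → S × S) := Set.univ.pi fun _ => A with hB
    have hBmeas : MeasurableSet B := MeasurableSet.univ_pi fun _ => hAmeas
    set π : (ℕ → S) → (Fin h → S) := fun x (i : Fin h) => x (i : ℕ) with hπ
    have hπm : Measurable π := measurable_pi_lambda _ fun i => measurable_pi_apply _
    have hmp1 : MeasurePreserving π μ (Measure.pi fun _ : Fin h => ν) := ⟨hπm, hiid h⟩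
    have hmp2 : MeasurePreserving (Prod.map π π) (μ.prod μ)
        ((Measure.pi fun _ : Fin h => ν).prod (Measure.pi fun _ : Fin h => ν)) :=
      hmp1.prod hmp1
    have hmp3 : MeasurePreserving (MeasurableEquiv.arrowProdEquivProdArrow S S (Fin h)).symm
        ((Measure.pi fun _ : Fin h => ν).prod (Measure.pi fun _ : Fin h => ν))
        (Measure.pi fun _ : Fin h => ν.prod ν) :=
      (measurePreserving_arrowProdEquivProdArrow S S (Fin h) (fun _ => ν) (fun _ => ν)).symm _
    have hmp : MeasurePreserving
        (fun p : (ℕ → S) × (ℕ → S) => (fun i : Fin h => (p.1 (i : ℕ), p.2 (i : ℕ))))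
        (μ.prod μ) (Measure.pi fun _ : Fin h => ν.prod ν) := by
      have hfeq : (fun p : (ℕ → S) × (ℕ → S) => (fun i : Fin h => (p.1 (i : ℕ), p.2 (i : ℕ))))
          = (MeasurableEquiv.arrowProdEquivProdArrow S S (Fin h)).symm ∘ Prod.map π π := by
        funext p
        rfl
      rw [hfeq]
      exact hmp3.comp hmp2
    have hset : {p : (ℕ → S) × (ℕ → S) | dmax h p.1 p.2 ≤ s}
        = (fun p : (ℕ → S) × (ℕ → S) => (fun i : Fin h => (p.1 (i : ℕ), p.2 (i : ℕ)))) ⁻¹' B := by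
      ext p
      simp only [Set.mem_setOf_eq, Set.mem_preimage, hB, Set.mem_pi, Set.mem_univ,
        forall_true_left, hA]
      unfold dmax
      rw [← Real.le_toNNReal_iff_coe_le hs, Finset.sup_le_iff]
      constructor
      · intro H i
        have := H (i : ℕ) (Finset.mem_range.2 i.isLt)
        rw [Real.le_toNNReal_iff_coe_le hs] at this
        simpa [coe_nndist] using this
      · intro H l hl
        rw [Real.le_toNNReal_iff_coe_le hs]
        have := H ⟨l, Finset.mem_range.1 hl⟩
        simpa [coe_nndist] using this
    rw [hset, hmp.measure_preimage hBmeas.nullMeasurableSet, hB, Measure.pi_pi,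
      Finset.prod_const, Finset.card_univ, Fintype.card_fin]
  -- the one-step quantity
  set q : ℕ → ℝ := fun m => ((ν.prod ν) {x : S × S | dist x.1 x.2 ≤ r m}).toReal with hqdef
  have hcval : ∀ m j : ℕ, 1 ≤ m → cInt μ m j (r m) = q m ^ (m + j - 1) := by
    intro m j hm
    unfold cInt
    rw [key _ _ (le_of_lt (hr m hm).1), ENNReal.toReal_pow]
  have hqm : ∀ m : ℕ, 1 ≤ m → q m ^ m = θ := by
    intro m hm
    have h2 := (hr m hm).2
    unfold rrInt at h2
    rw [hcval m 1 hm] at h2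
    simpa using h2
  have hq0 : ∀ m : ℕ, 1 ≤ m → 0 < q m := by
    intro m hm
    rcases lt_or_eq_of_le (ENNReal.toReal_nonneg : (0:ℝ) ≤ q m) with h | h
    · exact h
    · exfalso
      have h0 : q m = 0 := h.symm
      have h1 := hqm m hm
      rw [h0, zero_pow (by omega : m ≠ 0)] at h1
      exact absurd h1.symm (ne_of_gt hθ0)
  have hq1 : ∀ m : ℕ, 1 ≤ m → q m < 1 := by
    intro m hm
    by_contra hge
    push_neg at hge
    have : (1:ℝ) ≤ q m ^ m := one_le_pow₀ hge
    rw [hqm m hm] at this; linarith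
  -- q m → 1
  have hqlim : Tendsto q atTop (𝓝 1) := by
    rw [tendsto_order]
    constructor
    · intro a ha
      rcases le_or_gt 0 a with ha0 | ha0
      · have hpow : Tendsto (fun m : ℕ => a ^ m) atTop (𝓝 0) :=
          tendsto_pow_atTop_nhds_zero_of_lt_one ha0 ha
        have hev : ∀ᶠ m : ℕ in atTop, a ^ m < θ :=
          hpow.eventually (Filter.Tendsto.eventually_lt_const hθ0 tendsto_id) |>.mono (by tauto)
        filter_upwards [hev, eventually_ge_atTop 1] with m hm1 hm2
        have : a ^ m < q m ^ m := by rw [hqm m hm2]; exact hm1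
        exact lt_of_pow_lt_pow_left₀ m (le_of_lt (hq0 m hm2)) this
      · filter_upwards [eventually_ge_atTop 1] with m hm
        exact lt_trans ha0 (hq0 m hm)
    · intro a ha
      filter_upwards [eventually_ge_atTop 1] with m hm
      exact lt_trans (hq1 m hm) ha
  have hdet : ∀ᶠ m : ℕ in atTop, detInt μ m k (r m)
      = (k : ℝ) * q m ^ (k - 1) - ((k : ℝ) - 1) * q m ^ k := by
    filter_upwards [eventually_ge_atTop 1] with m hm
    have hm1 : m + 1 - 1 = m := by omega
    have hmk : m + k - 1 = m + (k - 1) := by omega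
    have hmk1 : m + (k + 1) - 1 = m + k := by omega
    have hq0' : q m ^ m ≠ 0 := pow_ne_zero _ (ne_of_gt (hq0 m hm))
    unfold detInt rrInt
    rw [hcval m k hm, hcval m (k + 1) hm, hcval m 1 hm, hcval m 2 hm, hm1, hmk, hmk1,
      pow_add, pow_add]
    have : m + 2 - 1 = m + 1 := by omega
    rw [this, pow_succ]
    field_simp
    ring
  have hlavg : ∀ᶠ m : ℕ in atTop, lavgInt μ m k (r m) = (k : ℝ) + q m / (1 - q m) := by
    filter_upwards [eventually_ge_atTop 1] with m hm
    have hmk : m + k - 1 = m + (k - 1) := by omega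
    have hmk1 : m + (k + 1) - 1 = m + (k - 1) + 1 := by omega
    have hq0' : (0:ℝ) < q m ^ (m + (k - 1)) := pow_pos (hq0 m hm) _
    have hq1' : q m < 1 := hq1 m hm
    unfold lavgInt
    rw [hcval m k hm, hcval m (k + 1) hm, hmk, hmk1, pow_succ]
    congr 1
    rw [div_eq_div_iff]
    · ring
    · have : q m ^ (m + (k - 1)) - q m ^ (m + (k - 1)) * q m
          = q m ^ (m + (k - 1)) * (1 - q m) := by ring
      rw [this]
      exact ne_of_gt (mul_pos hq0' (by linarith))
    · exact ne_of_gt (by linarith)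
  constructor
  · -- determinism → 1
    have hcont : Continuous fun c : ℝ => (k : ℝ) * c ^ (k - 1) - ((k : ℝ) - 1) * c ^ k := by
      continuity
    have hTo : Tendsto (fun m : ℕ => (k : ℝ) * q m ^ (k - 1) - ((k : ℝ) - 1) * q m ^ k)
        atTop (𝓝 1) := by
      have := (hcont.tendsto 1).comp hqlim
      simpa [Function.comp_def] using this
    exact Tendsto.congr' (hdet.mono fun m hm => hm.symm) hTo
  · -- lavg → ∞
    have h1q : Tendsto (fun m => 1 - q m) atTop (𝓝[>] 0) := by
      apply tendsto_nhdsWithin_of_tendsto_nhds_of_eventually_within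
      · have := hqlim.const_sub 1
        simpa using this
      · filter_upwards [eventually_ge_atTop 1] with m hm
        simp [Set.mem_Ioi, sub_pos, hq1 m hm]
    have hinv : Tendsto (fun m => (1 - q m)⁻¹) atTop atTop :=
      tendsto_inv_nhdsGT_zero.comp h1q
    have hdivlim : Tendsto (fun m => q m / (1 - q m)) atTop atTop := by
      simp only [div_eq_mul_inv]
      exact hqlim.pos_mul_atTop one_pos hinv
    have := tendsto_atTop_add_const_left atTop (k : ℝ) hdivlim
    exact Tendsto.congr' (hlavg.mono fun m hm => hm.symm) this
end

section
/- Let (Z,𝒜) be a measurable space, µ a probability measure on it, and T : Z → Z a measurable µ-preserving ergodic map. Let d : Z × Z → ℝ be a jointly measurable pseudometric (d(x,x) = 0, d(x,y) = d(y,x) ≥ 0, d(x,z) ≤ d(x,y) + d(y,z)) that is separable: there is a countable set D ⊆ Z such that for every x ∈ Z and every ε > 0 there is y ∈ D with d(x,y) < ε. Then for µ-a.e. x ∈ Z and every r > 0 at which the correlation integral c_d is continuous, lim_{n→∞} C_d(x,n,r) = c_d(r), and c_d(r) > 0. -/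
set_option linter.unusedSectionVars false
set_option linter.unnecessarySimpa false
set_option maxHeartbeats 1000000

open Filter Topology MeasureTheory


section Maximal

variable {Z : Type*} [MeasurableSpace Z] {μ : MeasureTheory.Measure Z} {T : Z → Z} {f : Z → ℝ}

/-- The running maximum `max (0, S₁ f, …, S_N f)` used in the maximal ergodic theorem. -/
noncomputable def maxSum (T : Z → Z) (f : Z → ℝ) : ℕ → Z → ℝ
  | 0 => fun _ => 0
  | (N + 1) => fun x => max (maxSum T f N x) (birkhoffSum T f (N + 1) x)

lemma maxSum_nonneg (N : ℕ) (x : Z) : 0 ≤ maxSum T f N x := by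
  induction N with
  | zero => simp [maxSum]
  | succ N ih => exact le_trans ih (le_max_left _ _)

lemma maxSum_mono (N : ℕ) (x : Z) : maxSum T f N x ≤ maxSum T f (N + 1) x :=
  le_max_left _ _

lemma measurable_birkhoffSum (hT : Measurable T) (hf : Measurable f) (n : ℕ) :
    Measurable (fun x => birkhoffSum T f n x) := by
  unfold birkhoffSum
  exact Finset.measurable_sum _ fun k _ => hf.comp (hT.iterate k)

lemma measurable_maxSum (hT : Measurable T) (hf : Measurable f) (N : ℕ) :
    Measurable (maxSum T f N) := by
  induction N with
  | zero => simpa [maxSum] using measurable_const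
  | succ N ih => exact ih.max (measurable_birkhoffSum hT hf (N + 1))

lemma integrable_birkhoffSum (hT : MeasureTheory.MeasurePreserving T μ μ)
    (hf : MeasureTheory.Integrable f μ) (n : ℕ) :
    MeasureTheory.Integrable (fun x => birkhoffSum T f n x) μ := by
  unfold birkhoffSum
  refine MeasureTheory.integrable_finset_sum _ fun k _ => ?_
  exact ((hT.iterate k).integrable_comp hf.aestronglyMeasurable).2 hf

lemma integrable_maxSum (hT : MeasureTheory.MeasurePreserving T μ μ)
    (hf : MeasureTheory.Integrable f μ) (N : ℕ) :
    MeasureTheory.Integrable (maxSum T f N) μ := by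
  induction N with
  | zero => simpa [maxSum] using MeasureTheory.integrable_const (0 : ℝ)
  | succ N ih =>
      have h2 := integrable_birkhoffSum hT hf (N + 1)
      have heq : maxSum T f (N + 1) = (maxSum T f N) ⊔ (fun x => birkhoffSum T f (N + 1) x) := by
        ext x; rw [maxSum]; rfl
      rw [heq]; exact ih.sup h2

lemma birkhoffSum_le_maxSum (N n : ℕ) (hn : 1 ≤ n) (hN : n ≤ N) (x : Z) :
    birkhoffSum T f n x ≤ maxSum T f N x := by
  induction N with
  | zero => omega
  | succ N ih =>
      rcases Nat.lt_or_ge n (N + 1) with h | h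
      · exact le_trans (ih (by omega)) (le_max_left _ _)
      · have : n = N + 1 := by omega
        subst this
        exact le_max_right _ _

lemma maxSum_eq_birkhoffSum_of_pos {N : ℕ} {x : Z} (h : 0 < maxSum T f N x) :
    ∃ n, 1 ≤ n ∧ n ≤ N ∧ maxSum T f N x = birkhoffSum T f n x := by
  induction N with
  | zero => simp [maxSum] at h
  | succ N ih =>
      have hmx : maxSum T f (N + 1) x
          = max (maxSum T f N x) (birkhoffSum T f (N + 1) x) := rfl
      rw [hmx] at h
      rcases le_or_gt (birkhoffSum T f (N + 1) x) (maxSum T f N x) with hc | hc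
      · have h' : 0 < maxSum T f N x := by rw [max_eq_left hc] at h; exact h
        obtain ⟨n, h1, h2, h3⟩ := ih h'
        exact ⟨n, h1, by omega, by rw [hmx, max_eq_left hc]; exact h3⟩
      · exact ⟨N + 1, by omega, le_rfl, by rw [hmx, max_eq_right hc.le]⟩

lemma maxSum_key {N : ℕ} {x : Z} (h : 0 < maxSum T f N x) :
    maxSum T f N x - maxSum T f N (T x) ≤ f x := by
  obtain ⟨n, h1, hN, heq⟩ := maxSum_eq_birkhoffSum_of_pos h
  obtain ⟨m, rfl⟩ : ∃ m, n = m + 1 := ⟨n - 1, by omega⟩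
  have hsucc : birkhoffSum T f (m + 1) x = f x + birkhoffSum T f m (T x) :=
    birkhoffSum_succ' T f m x
  have hle : birkhoffSum T f m (T x) ≤ maxSum T f N (T x) := by
    rcases Nat.eq_zero_or_pos m with rfl | hm
    · simpa [birkhoffSum_zero] using maxSum_nonneg N (T x)
    · exact birkhoffSum_le_maxSum N m hm (by omega) (T x)
  rw [heq, hsucc]
  linarith

/-- **Maximal ergodic theorem** (Garsia's proof). -/
lemma maximal_ergodic (hT : MeasureTheory.MeasurePreserving T μ μ) (hTm : Measurable T)
    (hfm : Measurable f) (hfi : MeasureTheory.Integrable f μ) (N : ℕ) :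
    0 ≤ ∫ x in {x | 0 < maxSum T f N x}, f x ∂μ := by
  set M := maxSum T f N with hM
  set E := {x | 0 < M x} with hEdef
  have hMmeas : Measurable M := measurable_maxSum hTm hfm N
  have hE : MeasurableSet E := measurableSet_lt measurable_const hMmeas
  have hMint : MeasureTheory.Integrable M μ := integrable_maxSum hT hfi N
  have hMTint : MeasureTheory.Integrable (fun x => M (T x)) μ :=
    (hT.integrable_comp hMmeas.aestronglyMeasurable).2 hMint
  have step1 : ∫ x in E, (M x - M (T x)) ∂μ ≤ ∫ x in E, f x ∂μ := by
    refine MeasureTheory.setIntegral_mono_on ((hMint.sub hMTint).integrableOn)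
      (hfi.integrableOn) hE (fun x hx => maxSum_key hx)
  have step2 : ∫ x in E, (M x - M (T x)) ∂μ
      = (∫ x in E, M x ∂μ) - ∫ x in E, M (T x) ∂μ :=
    MeasureTheory.integral_sub hMint.integrableOn hMTint.integrableOn
  have step3 : ∫ x in E, M x ∂μ = ∫ x, M x ∂μ := by
    have hcompl : ∫ x in Eᶜ, M x ∂μ = 0 := by
      have hz : ∀ᵐ x ∂(μ.restrict Eᶜ), M x = 0 := by
        refine (MeasureTheory.ae_restrict_iff' hE.compl).2 (MeasureTheory.ae_of_all _ ?_)
        intro x hx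
        exact le_antisymm (not_lt.1 hx) (maxSum_nonneg N x)
      rw [MeasureTheory.integral_congr_ae hz, MeasureTheory.integral_zero]
    have := MeasureTheory.integral_add_compl hE hMint
    linarith
  have step4 : ∫ x in E, M (T x) ∂μ ≤ ∫ x, M (T x) ∂μ :=
    MeasureTheory.setIntegral_le_integral hMTint
      (MeasureTheory.ae_of_all _ fun x => maxSum_nonneg N (T x))
  have step5 : ∫ x, M (T x) ∂μ = ∫ x, M x ∂μ := by
    rw [← MeasureTheory.integral_map hTm.aemeasurable hMmeas.aestronglyMeasurable, hT.map_eq]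
  linarith

end Maximal




section Birkhoff

variable {Z : Type*} [MeasurableSpace Z] {μ : MeasureTheory.Measure Z} {T : Z → Z} {f : Z → ℝ}

lemma integrable_of_bounded [MeasureTheory.IsProbabilityMeasure μ] (hfm : Measurable f)
    (C : ℝ) (hfb : ∀ x, |f x| ≤ C) : MeasureTheory.Integrable f μ :=
  ⟨hfm.aestronglyMeasurable, MeasureTheory.HasFiniteIntegral.of_bounded
    (MeasureTheory.ae_of_all _ fun x => by simpa [Real.norm_eq_abs] using hfb x)⟩

lemma birkhoff_upper (hT : Ergodic T μ) [MeasureTheory.IsProbabilityMeasure μ]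
    (hfm : Measurable f) (C : ℝ) (hfb : ∀ x, |f x| ≤ C) :
    ∀ᵐ x ∂μ, ∀ q : ℚ, (∫ x, f x ∂μ) < q →
      ∀ᶠ n in atTop, birkhoffSum T f n x / n ≤ q := by
  have hTm : Measurable T := hT.toMeasurePreserving.measurable
  have hfi : MeasureTheory.Integrable f μ := integrable_of_bounded hfm C hfb
  set I := ∫ x, f x ∂μ with hI
  set A : ℕ → Z → ℝ := fun n x => birkhoffSum T f n x / n with hA
  have hAmeas : ∀ n, Measurable (A n) := fun n =>
    (measurable_birkhoffSum hTm hfm n).div_const _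
  set F : ℚ → Set Z := fun t => {x | ∃ᶠ n in atTop, (t : ℝ) < A n x} with hF
  have hFmeas : ∀ t, MeasurableSet (F t) := by
    intro t
    have : F t = ⋂ m, ⋃ n, ⋃ (_ : m ≤ n), {x | (t : ℝ) < A n x} := by
      ext x
      simp [hF, Filter.frequently_atTop]
    rw [this]
    exact MeasurableSet.iInter fun m => MeasurableSet.iUnion fun n =>
      MeasurableSet.iUnion fun _ => measurableSet_lt measurable_const (hAmeas n)
  -- drift estimate
  have hdrift : ∀ x, ∀ n : ℕ, 1 ≤ n → |A n (T x) - A n x| ≤ 2 * C / n := by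
    intro x n hn
    have h1 := birkhoffSum_succ T f n x
    have h2 := birkhoffSum_succ' T f n x
    have hnpos : (0 : ℝ) < n := by exact_mod_cast hn
    have hS : A n (T x) - A n x = (f (T^[n] x) - f x) / n := by
      rw [hA]
      field_simp
      linarith
    rw [hS, abs_div, abs_of_pos hnpos]
    have h3 := abs_le.1 (hfb (T^[n] x))
    have h4 := abs_le.1 (hfb x)
    have h5 : |f (T^[n] x) - f x| ≤ 2 * C := abs_le.2 ⟨by linarith, by linarith⟩
    gcongr
  -- transfer of frequently along the drift
  have htrans : ∀ (t t' : ℚ), (t' : ℝ) < t → ∀ u v : Z,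
      (∀ n : ℕ, 1 ≤ n → |A n u - A n v| ≤ 2 * C / n) →
      (∃ᶠ n in atTop, (t : ℝ) < A n u) → (∃ᶠ n in atTop, (t' : ℝ) < A n v) := by
    intro t t' htt u v hduv hfreq
    have h0 : Tendsto (fun n : ℕ => 2 * C / (n : ℝ)) atTop (𝓝 0) :=
      tendsto_const_div_atTop_nhds_zero_nat (2 * C)
    have hev : ∀ᶠ n : ℕ in atTop, 2 * C / (n : ℝ) < (t : ℝ) - t' :=
      h0.eventually_lt_const (by linarith)
    have hev1 : ∀ᶠ n : ℕ in atTop, 1 ≤ n := eventually_ge_atTop 1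
    refine (hfreq.and_eventually (hev.and hev1)).mono ?_
    rintro n ⟨hnu, hne, hn1⟩
    have := abs_le.1 (hduv n hn1)
    linarith
  -- each F q with ∫ f < q is null
  have hFnull : ∀ q : ℚ, I < q → μ (F q) = 0 := by
    intro q hq
    obtain ⟨q', hq'1, hq'2⟩ := exists_rat_btwn hq
    set s := ⋃ (t : ℚ) (_ : q' < t), F t with hs
    have hsm : MeasurableSet s :=
      MeasurableSet.iUnion fun t => MeasurableSet.iUnion fun _ => hFmeas t
    have hsub : F q ⊆ s := Set.subset_iUnion₂ (s := fun t _ => F t) q (by exact_mod_cast hq'2)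
    have hinv : T ⁻¹' s = s := by
      ext x
      simp only [Set.mem_preimage, hs, Set.mem_iUnion]
      constructor
      · rintro ⟨t, ht, hx⟩
        refine ⟨(q' + t) / 2, by linarith, ?_⟩
        refine htrans t ((q' + t) / 2) (by exact_mod_cast (by linarith : ((q' + t) / 2 : ℚ) < t)) (T x) x
          (fun n hn => hdrift x n hn) hx
      · rintro ⟨t, ht, hx⟩
        refine ⟨(q' + t) / 2, by linarith, ?_⟩
        refine htrans t ((q' + t) / 2) (by exact_mod_cast (by linarith : ((q' + t) / 2 : ℚ) < t)) x (T x)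
          (fun n hn => by simpa [abs_sub_comm] using hdrift x n hn) hx
    rcases hT.ae_empty_or_univ hsm hinv with h0 | h1
    · exact measure_mono_null hsub (MeasureTheory.ae_eq_empty.1 h0)
    · exfalso
      set g : Z → ℝ := fun x => f x - q' with hg
      have hgm : Measurable g := hfm.sub measurable_const
      have hgi : MeasureTheory.Integrable g μ := hfi.sub (MeasureTheory.integrable_const _)
      have hgI : ∫ x, g x ∂μ = I - q' := by
        rw [hg]
        rw [MeasureTheory.integral_sub hfi (MeasureTheory.integrable_const _)]
        simp [hI]
      have hgneg : ∫ x, g x ∂μ < 0 := by rw [hgI]; linarith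
      set E : ℕ → Set Z := fun N => {x | 0 < maxSum T g N x} with hE
      have hEm : ∀ N, MeasurableSet (E N) := fun N =>
        measurableSet_lt measurable_const (measurable_maxSum hTm hgm N)
      have hmax_mono : ∀ x : Z, Monotone fun N => maxSum T g N x := fun x =>
        monotone_nat_of_le_succ fun N => maxSum_mono (T := T) (f := g) N x
      have hmono : Monotone E := fun N N' hNN' x hx => lt_of_lt_of_le hx (hmax_mono x hNN')
      have hssub : s ⊆ ⋃ N, E N := by
        intro x hx
        simp only [hs, Set.mem_iUnion] at hx ⊢
        obtain ⟨t, ht, hx⟩ := hx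
        obtain ⟨n, hn1, hn2⟩ := Filter.frequently_atTop.1 hx 1
        refine ⟨n, ?_⟩
        have hnpos : (0 : ℝ) < n := by exact_mod_cast hn1
        have hSf : (t : ℝ) * n < birkhoffSum T f n x := by
          rw [hA] at hn2
          exact (lt_div_iff₀ hnpos).1 hn2
        have hSg : birkhoffSum T g n x = birkhoffSum T f n x - n * q' := by
          simp [hg, birkhoffSum, Finset.sum_sub_distrib, mul_comm]
        have htq' : (q' : ℝ) < t := by exact_mod_cast ht
        have hpos : 0 < birkhoffSum T g n x := by
          rw [hSg]; nlinarith
        exact lt_of_lt_of_le hpos (birkhoffSum_le_maxSum n n hn1 le_rfl x)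
      have hsuniv : μ s = 1 := by
        rw [measure_congr h1, measure_univ]
      have hUuniv : μ (⋃ N, E N) = 1 :=
        le_antisymm prob_le_one (hsuniv ▸ measure_mono hssub)
      have htend : Tendsto (fun N => μ (E N)) atTop (𝓝 1) := by
        have := tendsto_measure_iUnion_atTop (μ := μ) hmono
        rwa [hUuniv] at this
      have hcompl : Tendsto (fun N => (μ (E N)ᶜ).toReal) atTop (𝓝 0) := by
        have h2 : ∀ N, (μ (E N)ᶜ).toReal = 1 - (μ (E N)).toReal := by
          intro N
          rw [measure_compl (hEm N) (measure_ne_top μ _), measure_univ]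
          rw [ENNReal.toReal_sub_of_le prob_le_one ENNReal.one_ne_top, ENNReal.toReal_one]
        simp only [h2]
        have h3 : Tendsto (fun N => (μ (E N)).toReal) atTop (𝓝 1) := by
          have := (ENNReal.tendsto_toReal ENNReal.one_ne_top).comp htend
          simpa [Function.comp_def] using this
        have := h3.const_sub 1
        simpa using this
      set K := C + |(q' : ℝ)| with hK
      have hCq : ∀ x, ‖g x‖ ≤ K := by
        intro x
        rw [Real.norm_eq_abs]
        have h1 := abs_le.1 (hfb x)
        have h2 := neg_abs_le (q' : ℝ)
        have h3 := le_abs_self (q' : ℝ)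
        have hgx : g x = f x - q' := rfl
        rw [hgx, hK]
        exact abs_le.2 ⟨by linarith, by linarith⟩
      have hlow : ∀ N, -(K * (μ (E N)ᶜ).toReal) ≤ ∫ x, g x ∂μ := by
        intro N
        have h0 : 0 ≤ ∫ x in E N, g x ∂μ :=
          maximal_ergodic hT.toMeasurePreserving hTm hgm hgi N
        have hsplit : ∫ x, g x ∂μ = (∫ x in E N, g x ∂μ) + ∫ x in (E N)ᶜ, g x ∂μ :=
          (MeasureTheory.integral_add_compl (hEm N) hgi).symm
        have habs : ‖∫ x in (E N)ᶜ, g x ∂μ‖ ≤ K * (μ (E N)ᶜ).toReal :=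
          MeasureTheory.norm_setIntegral_le_of_norm_le_const (measure_lt_top μ _)
            (fun x _ => hCq x)
        rw [Real.norm_eq_abs] at habs
        have := abs_le.1 habs
        linarith
      have hge : (0 : ℝ) ≤ ∫ x, g x ∂μ := by
        have hlim : Tendsto (fun N => -(K * (μ (E N)ᶜ).toReal)) atTop (𝓝 0) := by
          have := (hcompl.const_mul K).neg
          simpa using this
        exact le_of_tendsto' hlim hlow
      linarith
  -- aggregate over rationals
  have hae : ∀ q : ℚ, ∀ᵐ x ∂μ, I < q → ∀ᶠ n in atTop, A n x ≤ q := by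
    intro q
    by_cases hq : I < q
    · filter_upwards [measure_eq_zero_iff_ae_notMem.1 (hFnull q hq)] with x hx _
      have := Filter.not_frequently.1 hx
      exact this.mono fun n hn => not_lt.1 hn
    · exact MeasureTheory.ae_of_all _ fun x h => absurd h hq
  exact MeasureTheory.ae_all_iff.2 hae

/-- **Birkhoff's pointwise ergodic theorem** for bounded measurable functions. -/
lemma birkhoff_bounded (hT : Ergodic T μ) [MeasureTheory.IsProbabilityMeasure μ]
    (hfm : Measurable f) (C : ℝ) (hfb : ∀ x, |f x| ≤ C) :
    ∀ᵐ x ∂μ, Tendsto (fun n => birkhoffSum T f n x / n) atTop (𝓝 (∫ x, f x ∂μ)) := by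
  have hfi : MeasureTheory.Integrable f μ := integrable_of_bounded hfm C hfb
  have hupper := birkhoff_upper hT hfm C hfb
  have hlower := birkhoff_upper hT (f := fun x => -f x) hfm.neg C
    (fun x => by simpa using hfb x)
  filter_upwards [hupper, hlower] with x hu hl
  rw [tendsto_order]
  constructor
  · intro a ha
    have hIneg : ∫ x, -f x ∂μ = -∫ x, f x ∂μ := MeasureTheory.integral_neg f
    have hlt : (∫ x, -f x ∂μ) < -a := by rw [hIneg]; linarith
    obtain ⟨q, hq1, hq2⟩ := exists_rat_btwn hlt
    filter_upwards [hl q hq1] with n hn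
    have hneg : birkhoffSum T (fun x => -f x) n x = -birkhoffSum T f n x := by
      simp [birkhoffSum]
    rw [hneg, neg_div] at hn
    linarith
  · intro b hb
    obtain ⟨q, hq1, hq2⟩ := exists_rat_btwn hb
    filter_upwards [hu q hq1] with n hn
    exact lt_of_le_of_lt hn hq2

end Birkhoff

open Classical in
/-- The correlation sum
`C_d(x,n,r) = (1/n²)·card{(i,j) : 0 ≤ i,j < n, d(T^i x, T^j x) ≤ r}`. -/
noncomputable def corrSum {Z : Type*} (T : Z → Z) (d : Z → Z → ℝ) (x : Z) (n : ℕ)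
    (r : ℝ) : ℝ :=
  (((Finset.range n ×ˢ Finset.range n).filter fun p =>
      d (T^[p.1] x) (T^[p.2] x) ≤ r).card : ℝ) / (n : ℝ) ^ 2

/-- The correlation integral `c_d(r) = (µ×µ){(x,y) : d(x,y) ≤ r}`. -/
noncomputable def corrInt {Z : Type*} [MeasurableSpace Z] (μ : Measure Z)
    (d : Z → Z → ℝ) (r : ℝ) : ℝ :=
  ((μ.prod μ) {p : Z × Z | d p.1 p.2 ≤ r}).toReal

section Helpers

variable {Z : Type*} [MeasurableSpace Z] {μ : MeasureTheory.Measure Z}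

open Classical in
lemma integral_ite_mem [MeasureTheory.IsProbabilityMeasure μ] {s : Set Z}
    (hs : MeasurableSet s) :
    ∫ z, (if z ∈ s then (1 : ℝ) else 0) ∂μ = (μ s).toReal := by
  have h : (fun z => if z ∈ s then (1 : ℝ) else 0) = s.indicator (fun _ => (1 : ℝ)) := by
    ext z; simp [Set.indicator_apply]
  rw [h, MeasureTheory.integral_indicator_const (1 : ℝ) hs, smul_eq_mul, mul_one]; rfl

end Helpers

/-- Let `(Z,𝒜)` be a measurable space, `µ` a probability measure on
it, and `T : Z → Z` a measurable µ-preserving ergodic map. Let `d : Z × Z → ℝ` be a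
jointly measurable separable pseudometric. Then for µ-a.e. `x ∈ Z` and every `r > 0`
at which the correlation integral `c_d` is continuous,
`lim_{n→∞} C_d(x,n,r) = c_d(r)`, and `c_d(r) > 0`. -/


theorem strong_law_corrSum_pseudometric {Z : Type*} [MeasurableSpace Z]
    (μ : Measure Z) [IsProbabilityMeasure μ] (T : Z → Z) (hT : Ergodic T μ)
    (d : Z → Z → ℝ) (hd_meas : Measurable fun p : Z × Z => d p.1 p.2)
    (hd_self : ∀ x, d x x = 0) (hd_symm : ∀ x y, d x y = d y x)
    (hd_nonneg : ∀ x y, 0 ≤ d x y)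
    (hd_triangle : ∀ x y z, d x z ≤ d x y + d y z)
    (hd_sep : ∃ D : Set Z, D.Countable ∧ ∀ x : Z, ∀ ε : ℝ, 0 < ε → ∃ y ∈ D, d x y < ε) :
    ∀ᵐ x ∂μ, ∀ r : ℝ, 0 < r → ContinuousAt (corrInt μ d) r →
      Tendsto (fun n : ℕ => corrSum T d x n r) atTop (𝓝 (corrInt μ d r)) ∧
      0 < corrInt μ d r := by
  classical
  obtain ⟨D, hDcount, hDsep⟩ := hd_sep
  -- Z is nonempty
  have hZne : Nonempty Z := by
    by_contra h
    rw [not_nonempty_iff] at h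
    have h1 : μ Set.univ = 1 := measure_univ
    rw [Set.univ_eq_empty_iff.2 h, measure_empty] at h1
    exact zero_ne_one h1
  obtain ⟨z₀⟩ := hZne
  -- enumerate D
  obtain ⟨g, hg⟩ : ∃ g : ℕ → Z, ∀ y ∈ D, ∃ k, g k = y := by
    rcases Set.eq_empty_or_nonempty D with rfl | hne
    · exact ⟨fun _ => z₀, by simp⟩
    · obtain ⟨g, hgr⟩ := Set.Countable.exists_eq_range hDcount hne
      exact ⟨g, fun y hy => by rw [hgr] at hy; exact hy.imp fun k hk => hk⟩
  -- separability via g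
  have hgsep : ∀ z : Z, ∀ β : ℝ, 0 < β → ∃ k, d (g k) z < β := by
    intro z β hβ
    obtain ⟨y, hyD, hy⟩ := hDsep z β hβ
    obtain ⟨k, rfl⟩ := hg y hyD
    exact ⟨k, by rwa [hd_symm]⟩
  -- measurable sections
  have hsec : ∀ y : Z, Measurable fun z => d y z := fun y =>
    hd_meas.comp (measurable_prodMk_left)
  have hTm : Measurable T := hT.toMeasurePreserving.measurable
  -- closed-ball sets
  set Bset : Z → ℝ → Set Z := fun y t => {z | d y z ≤ t} with hBset
  have hBmeas : ∀ y t, MeasurableSet (Bset y t) := fun y t =>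
    measurableSet_le (hsec y) measurable_const
  -- indicator functions of closed balls
  set fB : Z → ℚ → Z → ℝ := fun y t z => if z ∈ Bset y (t : ℝ) then 1 else 0 with hfB
  have hfBmeas : ∀ y t, Measurable (fB y t) := fun y t =>
    Measurable.ite (hBmeas y t) measurable_const measurable_const
  have hfBbdd : ∀ y t z, |fB y t z| ≤ 1 := by
    intro y t z; simp only [hfB]; split_ifs <;> norm_num
  have hfBint : ∀ y t, ∫ z, fB y t z ∂μ = (μ (Bset y (t : ℝ))).toReal := fun y t =>
    integral_ite_mem (hBmeas y _)
  -- the ball-mass functions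
  set G : ℚ → Z → ℝ := fun q x => (μ (Bset x (q : ℝ))).toReal with hG
  have hGmeas : ∀ q : ℚ, Measurable (G q) := by
    intro q
    have hSq : MeasurableSet {p : Z × Z | d p.1 p.2 ≤ (q : ℝ)} :=
      measurableSet_le hd_meas measurable_const
    have : ∀ x, Bset x (q : ℝ) = Prod.mk x ⁻¹' {p : Z × Z | d p.1 p.2 ≤ (q : ℝ)} := by
      intro x; rfl
    simp only [hG, this]
    exact (measurable_measure_prodMk_left hSq).ennreal_toReal
  have hGbdd : ∀ q x, |G q x| ≤ 1 := by
    intro q x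
    rw [hG, abs_of_nonneg ENNReal.toReal_nonneg]
    calc (μ (Bset x (q:ℝ))).toReal ≤ (μ Set.univ).toReal :=
          ENNReal.toReal_mono (measure_ne_top _ _) (measure_mono (Set.subset_univ _))
      _ = 1 := by rw [measure_univ, ENNReal.toReal_one]
  have hGnonneg : ∀ q x, 0 ≤ G q x := fun q x => ENNReal.toReal_nonneg
  have hGle1 : ∀ q x, G q x ≤ 1 := fun q x => (le_abs_self _).trans (hGbdd q x)
  have hGint : ∀ q : ℚ, ∫ x, G q x ∂μ = corrInt μ d (q : ℝ) := by
    intro q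
    have hSq : MeasurableSet {p : Z × Z | d p.1 p.2 ≤ (q : ℝ)} :=
      measurableSet_le hd_meas measurable_const
    have hprod := MeasureTheory.Measure.prod_apply (μ := μ) (ν := μ) hSq
    have hmeas' : Measurable fun x => μ (Prod.mk x ⁻¹' {p : Z × Z | d p.1 p.2 ≤ (q : ℝ)}) :=
      measurable_measure_prodMk_left hSq
    have hint := MeasureTheory.integral_toReal (μ := μ) hmeas'.aemeasurable
      (MeasureTheory.ae_of_all μ fun x => measure_lt_top μ _)
    rw [corrInt, hprod, ← hint]
    rfl
  -- the finite covers
  set U : ℕ → ℚ → Set Z := fun m β => ⋃ k ∈ Finset.range m, {z : Z | d (g k) z < (β : ℝ)}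
    with hU
  have hUmeas : ∀ m β, MeasurableSet (U m β) := fun m β =>
    (Finset.range m).measurableSet_biUnion fun k _ =>
      measurableSet_lt (hsec (g k)) measurable_const
  have hUmono : ∀ β, Monotone fun m => U m β := by
    intro β m m' hmm'
    simp only [hU]
    apply Set.iUnion_mono
    intro k
    apply Set.iUnion_subset
    intro hk
    apply Set.subset_iUnion_of_subset
    · exact subset_rfl
    · simp only [Finset.mem_range] at hk
      exact Finset.mem_range.2 (lt_of_lt_of_le hk hmm')
  have hUcov : ∀ β : ℚ, 0 < (β : ℝ) → (⋃ m, U m β) = Set.univ := by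
    intro β hβ
    ext z
    simp only [Set.mem_iUnion, Set.mem_univ, iff_true, hU]
    obtain ⟨k, hk⟩ := hgsep z β hβ
    exact ⟨k + 1, k, by simp, hk⟩
  have hUlim : ∀ β : ℚ, 0 < (β : ℝ) →
      Tendsto (fun m => (μ (U m β)).toReal) atTop (𝓝 1) := by
    intro β hβ
    have h1 : Tendsto (fun m => μ (U m β)) atTop (𝓝 (μ (⋃ m, U m β))) :=
      tendsto_measure_iUnion_atTop (hUmono β)
    rw [hUcov β hβ, measure_univ] at h1
    have := (ENNReal.tendsto_toReal ENNReal.one_ne_top).comp h1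
    simpa [Function.comp_def] using this
  set indU : ℕ → ℚ → Z → ℝ := fun m β z => if z ∈ U m β then 1 else 0 with hindU
  have hindUmeas : ∀ m β, Measurable (indU m β) := fun m β =>
    Measurable.ite (hUmeas m β) measurable_const measurable_const
  have hindUbdd : ∀ m β z, |indU m β z| ≤ 1 := by
    intro m β z; simp only [hindU]; split_ifs <;> norm_num
  have hindUint : ∀ m β, ∫ z, indU m β z ∂μ = (μ (U m β)).toReal := fun m β =>
    integral_ite_mem (hUmeas m β)
  -- the three countable families of Birkhoff limits
  have hbirk1 : ∀ᵐ x ∂μ, ∀ p : ℕ × ℚ,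
      Tendsto (fun n => birkhoffSum T (fB (g p.1) p.2) n x / n) atTop
        (𝓝 ((μ (Bset (g p.1) (p.2 : ℝ))).toReal)) := by
    rw [MeasureTheory.ae_all_iff]
    intro p
    have := birkhoff_bounded hT (hfBmeas (g p.1) p.2) 1 (hfBbdd (g p.1) p.2)
    rw [hfBint] at this
    exact this
  have hbirk2 : ∀ᵐ x ∂μ, ∀ q : ℚ,
      Tendsto (fun n => birkhoffSum T (G q) n x / n) atTop (𝓝 (corrInt μ d (q : ℝ))) := by
    rw [MeasureTheory.ae_all_iff]
    intro q
    have := birkhoff_bounded hT (hGmeas q) 1 (hGbdd q)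
    rw [hGint] at this
    exact this
  have hbirk3 : ∀ᵐ x ∂μ, ∀ p : ℕ × ℚ,
      Tendsto (fun n => birkhoffSum T (indU p.1 p.2) n x / n) atTop
        (𝓝 ((μ (U p.1 p.2)).toReal)) := by
    rw [MeasureTheory.ae_all_iff]
    intro p
    have := birkhoff_bounded hT (hindUmeas p.1 p.2) 1 (hindUbdd p.1 p.2)
    rw [hindUint] at this
    exact this
  filter_upwards [hbirk1, hbirk2, hbirk3] with x h1 h2 h3
  intro r hr hcont
  constructor
  · -- the convergence statement
    have hBmem : ∀ (y : Z) (t : ℝ) (z : Z), z ∈ Bset y t ↔ d y z ≤ t := fun y t z => Iff.rfl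
    have hcnt : ∀ n : ℕ, corrSum T d x n r = (∑ i ∈ Finset.range n, ∑ j ∈ Finset.range n,
        (if d (T^[i] x) (T^[j] x) ≤ r then (1 : ℝ) else 0)) / (n : ℝ) ^ 2 := by
      intro n
      rw [corrSum]
      congr 1
      rw [Finset.natCast_card_filter]
      rw [Finset.sum_product]
    rw [Metric.tendsto_atTop]
    intro ε hε
    set e := ε / 5 with he
    have he0 : 0 < e := by positivity
    obtain ⟨δ, hδ0, hδ⟩ := Metric.continuousAt_iff.1 hcont e he0
    -- upper bound
    have hup : ∀ᶠ n in atTop, corrSum T d x n r < corrInt μ d r + 4 * e := by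
      obtain ⟨s₁, hs₁a, hs₁b⟩ := exists_rat_btwn (show r < r + δ / 2 by linarith)
      obtain ⟨β₁, hβ₁a, hβ₁b⟩ := exists_rat_btwn (show (0 : ℝ) < (s₁ : ℝ) - r by linarith)
      push_cast at hβ₁b
      obtain ⟨q₁, hq₁a, hq₁b⟩ := exists_rat_btwn (show (s₁ : ℝ) + (β₁ : ℝ) < r + δ by linarith)
      push_cast at hq₁a
      have hβ₁0 : 0 < (β₁ : ℝ) := hβ₁a
      obtain ⟨m₁, hm₁⟩ : ∃ m, 1 - e < (μ (U m β₁)).toReal :=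
        ((hUlim β₁ hβ₁0).eventually_const_lt (by linarith)).exists
      have hunif : ∀ᶠ n in atTop, ∀ k ∈ Finset.range m₁,
          birkhoffSum T (fB (g k) s₁) n x / n < (μ (Bset (g k) (s₁ : ℝ))).toReal + e := by
        rw [eventually_all_finset]
        intro k _
        exact (h1 (k, s₁)).eventually_lt_const (lt_add_of_pos_right _ he0)
      have hlim : Tendsto (fun n => birkhoffSum T (G q₁) n x / n + e + 1
          - birkhoffSum T (indU m₁ β₁) n x / n) atTop
          (𝓝 (corrInt μ d q₁ + e + 1 - (μ (U m₁ β₁)).toReal)) :=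
        (((h2 q₁).add_const e).add_const 1).sub (h3 (m₁, β₁))
      have hlt : corrInt μ d q₁ + e + 1 - (μ (U m₁ β₁)).toReal < corrInt μ d r + 4 * e := by
        have hd1 : dist (q₁ : ℝ) r < δ := by
          rw [Real.dist_eq, abs_lt]; constructor <;> linarith
        have hd2 := hδ hd1
        rw [Real.dist_eq, abs_lt] at hd2
        linarith [hd2.1, hd2.2]
      have hmaj := hlim.eventually_lt_const hlt
      filter_upwards [hunif, hmaj, eventually_ge_atTop 1] with n hun hmn hn1
      have hnpos : (0 : ℝ) < n := by exact_mod_cast hn1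
      have hkey : ∀ i ∈ Finset.range n,
          (∑ j ∈ Finset.range n, (if d (T^[i] x) (T^[j] x) ≤ r then (1 : ℝ) else 0))
          ≤ n * (G q₁ (T^[i] x) + e + (1 - indU m₁ β₁ (T^[i] x))) := by
        intro i _
        by_cases hgood : T^[i] x ∈ U m₁ β₁
        · obtain ⟨k, hkm, hkd⟩ : ∃ k, k ∈ Finset.range m₁ ∧ d (g k) (T^[i] x) < (β₁ : ℝ) := by
            have hm := hgood
            simp only [hU, Set.mem_iUnion, Set.mem_setOf_eq] at hm
            obtain ⟨k, hk1, hk2⟩ := hm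
            exact ⟨k, hk1, hk2⟩
          have hstep1 : (∑ j ∈ Finset.range n, (if d (T^[i] x) (T^[j] x) ≤ r then (1 : ℝ) else 0))
              ≤ ∑ j ∈ Finset.range n, fB (g k) s₁ (T^[j] x) := by
            apply Finset.sum_le_sum
            intro j _
            simp only [hfB]
            by_cases ha : d (T^[i] x) (T^[j] x) ≤ r
            · rw [if_pos ha, if_pos]
              rw [hBmem]
              calc d (g k) (T^[j] x) ≤ d (g k) (T^[i] x) + d (T^[i] x) (T^[j] x) :=
                    hd_triangle _ _ _
                _ ≤ (β₁ : ℝ) + r := add_le_add hkd.le ha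
                _ ≤ (s₁ : ℝ) := by linarith
            · rw [if_neg ha]
              split_ifs <;> norm_num
          have hstep2 : (∑ j ∈ Finset.range n, fB (g k) s₁ (T^[j] x))
              = birkhoffSum T (fB (g k) s₁) n x := rfl
          have hstep3 : birkhoffSum T (fB (g k) s₁) n x
              < n * ((μ (Bset (g k) (s₁ : ℝ))).toReal + e) := by
            have h' := hun k hkm
            rw [div_lt_iff₀ hnpos] at h'
            linarith [h']
          have hstep4 : (μ (Bset (g k) (s₁ : ℝ))).toReal ≤ G q₁ (T^[i] x) := by
            simp only [hG]
            apply ENNReal.toReal_mono (measure_ne_top _ _)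
            apply measure_mono
            intro z hz
            rw [hBmem] at hz ⊢
            calc d (T^[i] x) z ≤ d (T^[i] x) (g k) + d (g k) z := hd_triangle _ _ _
              _ ≤ (β₁ : ℝ) + (s₁ : ℝ) := add_le_add (by rw [hd_symm]; exact hkd.le) hz
              _ ≤ (q₁ : ℝ) := by linarith
          have hind1 : indU m₁ β₁ (T^[i] x) = 1 := by
            simp only [hindU]; rw [if_pos hgood]
          rw [hind1]
          have hch := hstep1.trans_eq hstep2
          nlinarith [hch, hstep3, hstep4, hnpos]
        · have hind0 : indU m₁ β₁ (T^[i] x) = 0 := by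
            simp only [hindU]; rw [if_neg hgood]
          rw [hind0]
          have hsum_le : (∑ j ∈ Finset.range n, (if d (T^[i] x) (T^[j] x) ≤ r then (1 : ℝ) else 0))
              ≤ n := by
            calc (∑ j ∈ Finset.range n, (if d (T^[i] x) (T^[j] x) ≤ r then (1 : ℝ) else 0))
                ≤ ∑ _j ∈ Finset.range n, (1 : ℝ) := by
                  apply Finset.sum_le_sum; intro j _; split_ifs <;> norm_num
              _ = n := by rw [Finset.sum_const, Finset.card_range]; simp
          have hG0 := hGnonneg q₁ (T^[i] x)
          nlinarith [hsum_le, hG0, he0, hnpos]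
      have hsum_eq : ∑ i ∈ Finset.range n, (n : ℝ) *
          (G q₁ (T^[i] x) + e + (1 - indU m₁ β₁ (T^[i] x)))
          = n * (birkhoffSum T (G q₁) n x + n * e
            + (n - birkhoffSum T (indU m₁ β₁) n x)) := by
        rw [← Finset.mul_sum]
        congr 1
        rw [Finset.sum_add_distrib, Finset.sum_add_distrib, Finset.sum_sub_distrib,
          Finset.sum_const, Finset.sum_const, Finset.card_range]
        simp only [birkhoffSum, nsmul_eq_mul, mul_one]
      have hb1 : (∑ i ∈ Finset.range n, ∑ j ∈ Finset.range n,
          (if d (T^[i] x) (T^[j] x) ≤ r then (1 : ℝ) else 0))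
          ≤ n * (birkhoffSum T (G q₁) n x + n * e
            + (n - birkhoffSum T (indU m₁ β₁) n x)) := by
        rw [← hsum_eq]
        exact Finset.sum_le_sum hkey
      have halg : ((n : ℝ) * (birkhoffSum T (G q₁) n x + n * e
          + (n - birkhoffSum T (indU m₁ β₁) n x))) / (n : ℝ) ^ 2
          = birkhoffSum T (G q₁) n x / n + e + 1 - birkhoffSum T (indU m₁ β₁) n x / n := by
        field_simp
        ring
      rw [hcnt n]
      calc (∑ i ∈ Finset.range n, ∑ j ∈ Finset.range n,
          (if d (T^[i] x) (T^[j] x) ≤ r then (1 : ℝ) else 0)) / (n : ℝ) ^ 2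
          ≤ ((n : ℝ) * (birkhoffSum T (G q₁) n x + n * e
            + (n - birkhoffSum T (indU m₁ β₁) n x))) / (n : ℝ) ^ 2 := by
            gcongr
        _ = birkhoffSum T (G q₁) n x / n + e + 1
            - birkhoffSum T (indU m₁ β₁) n x / n := halg
        _ < corrInt μ d r + 4 * e := hmn
    -- lower bound
    have hlo : ∀ᶠ n in atTop, corrInt μ d r - 4 * e < corrSum T d x n r := by
      obtain ⟨s₂, hs₂a, hs₂b⟩ := exists_rat_btwn (show r - δ / 2 < r by linarith)
      obtain ⟨β₂, hβ₂a, hβ₂b⟩ := exists_rat_btwn (show (0 : ℝ) < r - (s₂ : ℝ) by linarith)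
      push_cast at hβ₂b
      obtain ⟨q₂, hq₂a, hq₂b⟩ := exists_rat_btwn (show r - δ < 2 * (s₂ : ℝ) - r by linarith)
      push_cast at hq₂b
      have hβ₂0 : 0 < (β₂ : ℝ) := hβ₂a
      obtain ⟨m₂, hm₂⟩ : ∃ m, 1 - e < (μ (U m β₂)).toReal :=
        ((hUlim β₂ hβ₂0).eventually_const_lt (by linarith)).exists
      have hunif : ∀ᶠ n in atTop, ∀ k ∈ Finset.range m₂,
          (μ (Bset (g k) (s₂ : ℝ))).toReal - e < birkhoffSum T (fB (g k) s₂) n x / n := by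
        rw [eventually_all_finset]
        intro k _
        exact (h1 (k, s₂)).eventually_const_lt (sub_lt_self _ he0)
      have hlim : Tendsto (fun n => birkhoffSum T (G q₂) n x / n - e - 1
          + birkhoffSum T (indU m₂ β₂) n x / n) atTop
          (𝓝 (corrInt μ d q₂ - e - 1 + (μ (U m₂ β₂)).toReal)) :=
        (((h2 q₂).sub_const e).sub_const 1).add (h3 (m₂, β₂))
      have hgt : corrInt μ d r - 4 * e < corrInt μ d q₂ - e - 1 + (μ (U m₂ β₂)).toReal := by
        have hd1 : dist (q₂ : ℝ) r < δ := by
          rw [Real.dist_eq, abs_lt]; constructor <;> linarith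
        have hd2 := hδ hd1
        rw [Real.dist_eq, abs_lt] at hd2
        linarith [hd2.1, hd2.2]
      have hmin := hlim.eventually_const_lt hgt
      filter_upwards [hunif, hmin, eventually_ge_atTop 1] with n hun hmn hn1
      have hnpos : (0 : ℝ) < n := by exact_mod_cast hn1
      have hkey : ∀ i ∈ Finset.range n,
          (n : ℝ) * (G q₂ (T^[i] x) - e - (1 - indU m₂ β₂ (T^[i] x)))
          ≤ ∑ j ∈ Finset.range n, (if d (T^[i] x) (T^[j] x) ≤ r then (1 : ℝ) else 0) := by
        intro i _
        by_cases hgood : T^[i] x ∈ U m₂ β₂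
        · obtain ⟨k, hkm, hkd⟩ : ∃ k, k ∈ Finset.range m₂ ∧ d (g k) (T^[i] x) < (β₂ : ℝ) := by
            have hm := hgood
            simp only [hU, Set.mem_iUnion, Set.mem_setOf_eq] at hm
            obtain ⟨k, hk1, hk2⟩ := hm
            exact ⟨k, hk1, hk2⟩
          have hstep1 : (∑ j ∈ Finset.range n, fB (g k) s₂ (T^[j] x))
              ≤ ∑ j ∈ Finset.range n, (if d (T^[i] x) (T^[j] x) ≤ r then (1 : ℝ) else 0) := by
            apply Finset.sum_le_sum
            intro j _
            simp only [hfB]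
            by_cases ha : T^[j] x ∈ Bset (g k) (s₂ : ℝ)
            · rw [if_pos ha, if_pos]
              rw [hBmem] at ha
              calc d (T^[i] x) (T^[j] x) ≤ d (T^[i] x) (g k) + d (g k) (T^[j] x) :=
                    hd_triangle _ _ _
                _ ≤ (β₂ : ℝ) + (s₂ : ℝ) := add_le_add (by rw [hd_symm]; exact hkd.le) ha
                _ ≤ r := by linarith
            · rw [if_neg ha]
              split_ifs <;> norm_num
          have hstep3 : (n : ℝ) * ((μ (Bset (g k) (s₂ : ℝ))).toReal - e)
              < birkhoffSum T (fB (g k) s₂) n x := by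
            have h' := hun k hkm
            rw [lt_div_iff₀ hnpos] at h'
            linarith [h']
          have hstep4 : G q₂ (T^[i] x) ≤ (μ (Bset (g k) (s₂ : ℝ))).toReal := by
            simp only [hG]
            apply ENNReal.toReal_mono (measure_ne_top _ _)
            apply measure_mono
            intro z hz
            rw [hBmem] at hz ⊢
            calc d (g k) z ≤ d (g k) (T^[i] x) + d (T^[i] x) z := hd_triangle _ _ _
              _ ≤ (β₂ : ℝ) + (q₂ : ℝ) := add_le_add hkd.le hz
              _ ≤ (s₂ : ℝ) := by linarith
          have hind1 : indU m₂ β₂ (T^[i] x) = 1 := by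
            simp only [hindU]; rw [if_pos hgood]
          rw [hind1]
          have hs2 : (∑ j ∈ Finset.range n, fB (g k) s₂ (T^[j] x))
              = birkhoffSum T (fB (g k) s₂) n x := rfl
          nlinarith [hstep1, hstep3, hstep4, hnpos, hs2]
        · have hind0 : indU m₂ β₂ (T^[i] x) = 0 := by
            simp only [hindU]; rw [if_neg hgood]
          rw [hind0]
          have hsum_ge : (0:ℝ) ≤ ∑ j ∈ Finset.range n,
              (if d (T^[i] x) (T^[j] x) ≤ r then (1 : ℝ) else 0) := by
            apply Finset.sum_nonneg; intro j _; split_ifs <;> norm_num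
          have hG1 := hGle1 q₂ (T^[i] x)
          nlinarith [hsum_ge, hG1, he0, hnpos]
      have hsum_eq : ∑ i ∈ Finset.range n, (n : ℝ) *
          (G q₂ (T^[i] x) - e - (1 - indU m₂ β₂ (T^[i] x)))
          = n * (birkhoffSum T (G q₂) n x - n * e
            - (n - birkhoffSum T (indU m₂ β₂) n x)) := by
        rw [← Finset.mul_sum]
        congr 1
        rw [Finset.sum_sub_distrib, Finset.sum_sub_distrib, Finset.sum_sub_distrib,
          Finset.sum_const, Finset.sum_const, Finset.card_range]
        simp only [birkhoffSum, nsmul_eq_mul, mul_one]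
      have hb1 : (n : ℝ) * (birkhoffSum T (G q₂) n x - n * e
            - (n - birkhoffSum T (indU m₂ β₂) n x))
          ≤ (∑ i ∈ Finset.range n, ∑ j ∈ Finset.range n,
            (if d (T^[i] x) (T^[j] x) ≤ r then (1 : ℝ) else 0)) := by
        rw [← hsum_eq]
        exact Finset.sum_le_sum hkey
      have halg : ((n : ℝ) * (birkhoffSum T (G q₂) n x - n * e
          - (n - birkhoffSum T (indU m₂ β₂) n x))) / (n : ℝ) ^ 2
          = birkhoffSum T (G q₂) n x / n - e - 1 + birkhoffSum T (indU m₂ β₂) n x / n := by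
        field_simp
        ring
      rw [hcnt n]
      calc corrInt μ d r - 4 * e
          < birkhoffSum T (G q₂) n x / n - e - 1
            + birkhoffSum T (indU m₂ β₂) n x / n := hmn
        _ = ((n : ℝ) * (birkhoffSum T (G q₂) n x - n * e
            - (n - birkhoffSum T (indU m₂ β₂) n x))) / (n : ℝ) ^ 2 := halg.symm
        _ ≤ (∑ i ∈ Finset.range n, ∑ j ∈ Finset.range n,
            (if d (T^[i] x) (T^[j] x) ≤ r then (1 : ℝ) else 0)) / (n : ℝ) ^ 2 := by
            gcongr
    obtain ⟨N, hN⟩ := eventually_atTop.1 (hup.and hlo)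
    refine ⟨N, fun n hn => ?_⟩
    obtain ⟨hu', hl'⟩ := hN n hn
    rw [Real.dist_eq, abs_lt]
    refine ⟨by linarith, by linarith⟩
  · -- positivity
    obtain ⟨k, hk⟩ : ∃ k, 0 < μ {z : Z | d (g k) z < r / 2} := by
      by_contra h
      push_neg at h
      simp only [le_zero_iff] at h
      have hcov : (⋃ k, {z : Z | d (g k) z < r / 2}) = Set.univ := by
        ext z
        simp only [Set.mem_iUnion, Set.mem_univ, iff_true]
        exact hgsep z (r / 2) (by linarith)
      have := measure_iUnion_null h
      rw [hcov, measure_univ] at this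
      exact one_ne_zero this
    set B := {z : Z | d (g k) z < r / 2} with hB
    have hBm : MeasurableSet B := measurableSet_lt (hsec (g k)) measurable_const
    have hsub : B ×ˢ B ⊆ {p : Z × Z | d p.1 p.2 ≤ r} := by
      rintro ⟨a, b⟩ ⟨ha, hb⟩
      simp only [hB, Set.mem_setOf_eq] at ha hb ⊢
      have htri := hd_triangle a (g k) b
      have hsymm : d a (g k) = d (g k) a := hd_symm _ _
      linarith
    have hmul : 0 < μ B * μ B := ENNReal.mul_pos hk.ne' hk.ne'
    have hle : μ B * μ B ≤ (μ.prod μ) {p : Z × Z | d p.1 p.2 ≤ r} := by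
      rw [← MeasureTheory.Measure.prod_prod]
      exact measure_mono hsub
    rw [corrInt]
    exact ENNReal.toReal_pos (lt_of_lt_of_le hmul hle).ne' (measure_ne_top _ _)
end

section
/- Let (Z,𝒜) be a measurable space, µ a probability measure on it, and d : Z × Z → ℝ a jointly measurable pseudometric (d(x,x) = 0, d(x,y) = d(y,x) ≥ 0, d(x,z) ≤ d(x,y) + d(y,z)) that is separable: there is a countable set D ⊆ Z such that for every x ∈ Z and every ε > 0 there is y ∈ D with d(x,y) < ε. Then the correlation integral satisfies c_d(r) > 0 for every r > 0. -/
open MeasureTheory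

/-- Let `(Z,𝒜)` be a measurable space, `µ` a probability measure on
it, and `d : Z × Z → ℝ` a jointly measurable separable pseudometric. Then the
correlation integral satisfies `c_d(r) > 0` for every `r > 0`. -/
theorem corrInt_pos_of_separable_pseudometric {Z : Type*} [MeasurableSpace Z]
    (μ : Measure Z) [IsProbabilityMeasure μ]
    (d : Z → Z → ℝ) (hd_meas : Measurable fun p : Z × Z => d p.1 p.2)
    (hd_self : ∀ x, d x x = 0) (hd_symm : ∀ x y, d x y = d y x)
    (hd_nonneg : ∀ x y, 0 ≤ d x y)
    (hd_triangle : ∀ x y z, d x z ≤ d x y + d y z)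
    (hd_sep : ∃ D : Set Z, D.Countable ∧ ∀ x : Z, ∀ ε : ℝ, 0 < ε → ∃ y ∈ D, d x y < ε) :
    ∀ r : ℝ, 0 < r → 0 < corrInt μ d r := by
  obtain ⟨D, hDc, hDd⟩ := hd_sep
  intro r hr
  set B : Z → Set Z := fun y => {x | d x y < r / 2} with hB
  have hBmeas : ∀ y, MeasurableSet (B y) := fun y =>
    measurableSet_lt (hd_meas.comp (measurable_id.prodMk measurable_const)) measurable_const
  have hcover : (⋃ y ∈ D, B y) = Set.univ := by
    ext x
    simp only [Set.mem_iUnion, Set.mem_univ, iff_true]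
    obtain ⟨y, hy, hxy⟩ := hDd x (r / 2) (by linarith)
    exact ⟨y, hy, hxy⟩
  have hex : ∃ y ∈ D, 0 < μ (B y) := by
    by_contra h
    push_neg at h
    have h0 : μ (⋃ y ∈ D, B y) = 0 :=
      (measure_biUnion_null_iff hDc).mpr fun y hy => le_antisymm (h y hy) zero_le
    rw [hcover] at h0
    simp [measure_univ] at h0
  obtain ⟨y, _, hpos⟩ := hex
  have hsub : B y ×ˢ B y ⊆ {p : Z × Z | d p.1 p.2 ≤ r} := by
    rintro ⟨a, b⟩ ⟨ha, hb⟩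
    have h1 : d a y < r / 2 := ha
    have h2 : d b y < r / 2 := hb
    have h3 : d a b ≤ d a y + d y b := hd_triangle a y b
    have h4 : d y b = d b y := hd_symm y b
    simp only [Set.mem_setOf_eq]
    linarith
  have hprod : 0 < (μ.prod μ) (B y ×ˢ B y) := by
    rw [Measure.prod_prod]
    exact ENNReal.mul_pos hpos.ne' hpos.ne'
  have hle : (μ.prod μ) (B y ×ˢ B y) ≤ (μ.prod μ) {p : Z × Z | d p.1 p.2 ≤ r} :=
    measure_mono hsub
  have hfin : (μ.prod μ) {p : Z × Z | d p.1 p.2 ≤ r} ≠ ⊤ := measure_ne_top _ _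
  exact ENNReal.toReal_pos (lt_of_lt_of_le hprod hle).ne' hfin
end
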